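/- arXiv:1310.1998 — 5 statements merged into one kernel-verified Lean document; each statement's English description precedes it below -/
import Mathlib

section
/- For every prime number p, the sum ∑_{k=1}^∞ p^{min(2k−2, 20k/11) − 2k} is at most 20 · p^{−2}. (Here the exponent min(2k−2, 20k/11) − 2k is a rational number and p raised to it is the real power.) -/
/-- For every prime `p`, the series
`∑_{k=1}^∞ p^(min(2k−2, 20k/11) − 2k)` converges and its sum is at most `20 · p⁻²`.
The sum over `k ≥ 1` is written as a `tsum` over `n : ℕ` with `k = n + 1`. -/
theorem sum_min_exponent_le (p : ℕ) (hp : p.Prime) :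
    (Summable fun n : ℕ =>
      (p : ℝ) ^ (min (2 * ((n : ℝ) + 1) - 2) (20 * ((n : ℝ) + 1) / 11) - 2 * ((n : ℝ) + 1))) ∧
    (∑' n : ℕ,
      (p : ℝ) ^ (min (2 * ((n : ℝ) + 1) - 2) (20 * ((n : ℝ) + 1) / 11) - 2 * ((n : ℝ) + 1)))
      ≤ 20 * (p : ℝ) ^ (-2 : ℝ) := by
  set x : ℝ := (p : ℝ) with hxdef
  have hx2 : (2 : ℝ) ≤ x := by rw [hxdef]; exact_mod_cast hp.two_le
  have hx0 : (0 : ℝ) < x := by linarith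
  have hx1 : (1 : ℝ) < x := by linarith
  set f : ℕ → ℝ := fun n : ℕ =>
      x ^ (min (2 * ((n : ℝ) + 1) - 2) (20 * ((n : ℝ) + 1) / 11) - 2 * ((n : ℝ) + 1)) with hf
  set r : ℝ := x ^ ((-2 : ℝ) / 11) with hr
  have hr0 : 0 < r := Real.rpow_pos_of_pos hx0 _
  have hr1 : r < 1 := Real.rpow_lt_one_of_one_lt_of_neg hx1 (by norm_num)
  -- the tail is geometric
  have htail : ∀ n : ℕ, f (n + 11) = x ^ ((-24 : ℝ) / 11) * r ^ n := by
    intro n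
    have hn : (0 : ℝ) ≤ (n : ℝ) := Nat.cast_nonneg n
    have hmin : min (2 * ((↑(n + 11) : ℝ) + 1) - 2) (20 * ((↑(n + 11) : ℝ) + 1) / 11)
        = 20 * ((↑(n + 11) : ℝ) + 1) / 11 := by
      push_cast
      rw [min_eq_right]
      linarith
    simp only [hf, hmin, hr]
    rw [← Real.rpow_natCast (x ^ ((-2 : ℝ) / 11)) n, ← Real.rpow_mul (le_of_lt hx0),
      ← Real.rpow_add hx0]
    push_cast
    congr 1
    ring
  -- summability
  have hgs : Summable fun n : ℕ => x ^ ((-24 : ℝ) / 11) * r ^ n :=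
    (summable_geometric_of_lt_one (le_of_lt hr0) hr1).mul_left _
  have hsum : Summable f := by
    rw [← summable_nat_add_iff 11]
    exact hgs.congr fun n => (htail n).symm
  refine ⟨hsum, ?_⟩
  -- split the sum
  have hsplit := (Summable.sum_add_tsum_nat_add 11 hsum).symm
  -- head terms
  have hhead : ∀ i ∈ Finset.range 11, f i = x ^ (-2 : ℝ) := by
    intro i hi
    have hi' : (i : ℝ) ≤ 10 := by
      exact_mod_cast Nat.le_of_lt_succ (Finset.mem_range.mp hi)
    have hmin : min (2 * ((i : ℝ) + 1) - 2) (20 * ((i : ℝ) + 1) / 11)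
        = 2 * ((i : ℝ) + 1) - 2 := by
      rw [min_eq_left]; linarith
    simp only [hf, hmin]
    congr 1
    ring
  have hheadsum : ∑ i ∈ Finset.range 11, f i = 11 * x ^ (-2 : ℝ) := by
    rw [Finset.sum_congr rfl hhead, Finset.sum_const, Finset.card_range]
    simp
  have htailsum : (∑' n : ℕ, f (n + 11)) = x ^ ((-24 : ℝ) / 11) * (1 - r)⁻¹ := by
    rw [tsum_congr htail, tsum_mul_left, tsum_geometric_of_lt_one (le_of_lt hr0) hr1]
  -- bound r ≤ 9/10
  have hrpow : r ^ (11 : ℕ) = x ^ (-2 : ℝ) := by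
    rw [hr, ← Real.rpow_natCast (x ^ ((-2 : ℝ) / 11)) 11, ← Real.rpow_mul (le_of_lt hx0)]
    norm_num
  have hxneg2 : x ^ (-2 : ℝ) ≤ 1 / 4 := by
    have h4 : (4 : ℝ) ≤ x ^ (2 : ℝ) := by
      calc (4 : ℝ) = 2 ^ (2 : ℝ) := by
            rw [show (2:ℝ) = ((2:ℕ):ℝ) by norm_num, Real.rpow_natCast]; norm_num
        _ ≤ x ^ (2 : ℝ) := Real.rpow_le_rpow (by norm_num) hx2 (by norm_num)
    rw [Real.rpow_neg (le_of_lt hx0)]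
    have hxp : (0 : ℝ) < x ^ (2 : ℝ) := Real.rpow_pos_of_pos hx0 _
    rw [inv_le_iff_one_le_mul₀ hxp]
    nlinarith
  have hr910 : r ≤ 9 / 10 := by
    have h1 : r ^ (11 : ℕ) ≤ (9 / 10 : ℝ) ^ (11 : ℕ) := by
      rw [hrpow]
      calc x ^ (-2 : ℝ) ≤ 1 / 4 := hxneg2
        _ ≤ (9 / 10 : ℝ) ^ (11 : ℕ) := by norm_num
    exact le_of_pow_le_pow_left₀ (by norm_num) (by norm_num) h1
  -- final arithmetic
  have hx24 : x ^ ((-24 : ℝ) / 11) = x ^ (-2 : ℝ) * r := by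
    rw [hr, ← Real.rpow_add hx0]; norm_num
  rw [hsplit, hheadsum, htailsum, hx24]
  have ha : (0 : ℝ) < x ^ (-2 : ℝ) := Real.rpow_pos_of_pos hx0 _
  have h1r : (0 : ℝ) < 1 - r := by linarith
  rw [mul_assoc, mul_comm (x ^ (-2 : ℝ)) (r * (1 - r)⁻¹)]
  have : r * (1 - r)⁻¹ ≤ 9 := by
    rw [← div_eq_mul_inv, div_le_iff₀ h1r]
    linarith
  nlinarith
end

section
/- For every ε > 0 there exists a constant C_ε > 0 such that for every squarefree positive integer d, ∏_{p | d} (∑_{k=1}^∞ p^{min(2k−2, 20k/11) − 2k}) ≤ C_ε · d^{−2 + ε}, where the product is over the prime divisors p of d. -/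
open Real

private lemma aux_tsum_le (p : ℕ) (hp : p.Prime) :
    (∑' n : ℕ,
        (p : ℝ) ^ (min (2 * ((n : ℝ) + 1) - 2) (20 * ((n : ℝ) + 1) / 11) - 2 * ((n : ℝ) + 1)))
      ≤ ((2:ℝ) ^ ((20:ℝ)/11) * (1 - (2:ℝ) ^ (-(2:ℝ)/11))⁻¹) * (p : ℝ) ^ (-2 : ℝ) := by
  set q : ℝ := (2:ℝ) ^ (-(2:ℝ)/11) with hq
  have hq0 : 0 < q := Real.rpow_pos_of_pos (by norm_num) _
  have hq1 : q < 1 := Real.rpow_lt_one_of_one_lt_of_neg (by norm_num) (by norm_num)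
  have hp2 : (2:ℝ) ≤ (p:ℝ) := by exact_mod_cast hp.two_le
  have hp0 : (0:ℝ) < (p:ℝ) := by linarith
  have hp1 : (1:ℝ) ≤ (p:ℝ) := by linarith
  -- termwise bound
  have key : ∀ n : ℕ,
      (p : ℝ) ^ (min (2 * ((n : ℝ) + 1) - 2) (20 * ((n : ℝ) + 1) / 11) - 2 * ((n : ℝ) + 1))
        ≤ ((p:ℝ) ^ (-2:ℝ) * (2:ℝ) ^ ((20:ℝ)/11)) * q ^ n := by
    intro n
    set e : ℝ := min (2 * ((n : ℝ) + 1) - 2) (20 * ((n : ℝ) + 1) / 11) - 2 * ((n : ℝ) + 1)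
      with he
    have h1 : e + 2 ≤ 0 := by
      have := min_le_left (2 * ((n : ℝ) + 1) - 2) (20 * ((n : ℝ) + 1) / 11)
      simp only [he]; linarith
    have h2 : e + 2 ≤ (20 - 2 * (n:ℝ)) / 11 := by
      have := min_le_right (2 * ((n : ℝ) + 1) - 2) (20 * ((n : ℝ) + 1) / 11)
      simp only [he]; linarith
    have split : (p:ℝ) ^ e = (p:ℝ) ^ (-2:ℝ) * (p:ℝ) ^ (e + 2) := by
      rw [← Real.rpow_add hp0]; ring_nf
    rw [split]
    have step1 : (p:ℝ) ^ (e + 2) ≤ (2:ℝ) ^ (e + 2) :=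
      Real.rpow_le_rpow_of_nonpos (by norm_num) hp2 h1
    have step2 : (2:ℝ) ^ (e + 2) ≤ (2:ℝ) ^ ((20 - 2 * (n:ℝ)) / 11) :=
      Real.rpow_le_rpow_of_exponent_le (by norm_num) h2
    have step3 : (2:ℝ) ^ ((20 - 2 * (n:ℝ)) / 11) = (2:ℝ) ^ ((20:ℝ)/11) * q ^ n := by
      have : (20 - 2 * (n:ℝ)) / 11 = (20:ℝ)/11 + (n:ℝ) * (-(2:ℝ)/11) := by ring
      rw [this, Real.rpow_add (by norm_num), mul_comm (n:ℝ) (-(2:ℝ)/11),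
        Real.rpow_mul (by norm_num), hq, Real.rpow_natCast]
    have hpe : 0 ≤ (p:ℝ) ^ (-2:ℝ) := (Real.rpow_pos_of_pos hp0 _).le
    calc (p:ℝ) ^ (-2:ℝ) * (p:ℝ) ^ (e + 2)
        ≤ (p:ℝ) ^ (-2:ℝ) * ((2:ℝ) ^ ((20:ℝ)/11) * q ^ n) := by
          apply mul_le_mul_of_nonneg_left _ hpe
          calc (p:ℝ) ^ (e+2) ≤ (2:ℝ) ^ (e+2) := step1
            _ ≤ _ := step2.trans_eq step3
      _ = ((p:ℝ) ^ (-2:ℝ) * (2:ℝ) ^ ((20:ℝ)/11)) * q ^ n := by ring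
  have hgsum : Summable (fun n : ℕ =>
      ((p:ℝ) ^ (-2:ℝ) * (2:ℝ) ^ ((20:ℝ)/11)) * q ^ n) :=
    (summable_geometric_of_lt_one hq0.le hq1).mul_left _
  have hfsum : Summable (fun n : ℕ =>
      (p : ℝ) ^ (min (2 * ((n : ℝ) + 1) - 2) (20 * ((n : ℝ) + 1) / 11) - 2 * ((n : ℝ) + 1))) :=
    Summable.of_nonneg_of_le (fun n => (Real.rpow_pos_of_pos hp0 _).le) key hgsum
  calc (∑' n : ℕ, (p : ℝ) ^
        (min (2 * ((n : ℝ) + 1) - 2) (20 * ((n : ℝ) + 1) / 11) - 2 * ((n : ℝ) + 1)))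
      ≤ ∑' n : ℕ, ((p:ℝ) ^ (-2:ℝ) * (2:ℝ) ^ ((20:ℝ)/11)) * q ^ n :=
        Summable.tsum_le_tsum key hfsum hgsum
    _ = ((p:ℝ) ^ (-2:ℝ) * (2:ℝ) ^ ((20:ℝ)/11)) * (1 - q)⁻¹ := by
        rw [tsum_mul_left, tsum_geometric_of_lt_one hq0.le hq1]
    _ = ((2:ℝ) ^ ((20:ℝ)/11) * (1 - q)⁻¹) * (p : ℝ) ^ (-2 : ℝ) := by ring

/-- For every `ε > 0` there exists `C_ε > 0` such that for every
squarefree positive integer `d`,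
`∏_{p ∣ d} (∑_{k=1}^∞ p^(min(2k−2, 20k/11) − 2k)) ≤ C_ε · d^(−2+ε)`,
the product being over the prime divisors `p` of `d`. -/
theorem prod_over_prime_divisors_le :
    ∀ ε : ℝ, 0 < ε → ∃ C : ℝ, 0 < C ∧ ∀ d : ℕ, Squarefree d →
      (∏ p ∈ d.primeFactors,
        ∑' n : ℕ,
          (p : ℝ) ^ (min (2 * ((n : ℝ) + 1) - 2) (20 * ((n : ℝ) + 1) / 11) - 2 * ((n : ℝ) + 1)))
        ≤ C * (d : ℝ) ^ (-2 + ε) := by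
  intro ε hε
  set q : ℝ := (2:ℝ) ^ (-(2:ℝ)/11) with hq
  have hq1 : q < 1 := Real.rpow_lt_one_of_one_lt_of_neg (by norm_num) (by norm_num)
  set A : ℝ := (2:ℝ) ^ ((20:ℝ)/11) * (1 - q)⁻¹ with hA
  have hA0 : 0 < A := mul_pos (Real.rpow_pos_of_pos (by norm_num) _)
    (inv_pos.mpr (by linarith))
  set B : ℝ := max A 1 with hB
  have hB1 : (1:ℝ) ≤ B := le_max_right _ _
  have hAB : A ≤ B := le_max_left _ _
  obtain ⟨P, hP⟩ := exists_nat_ge (A ^ (1/ε))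
  refine ⟨B ^ P, pow_pos (lt_of_lt_of_le one_pos hB1) P, ?_⟩
  intro d hd
  -- per-prime bound
  have keyp : ∀ p ∈ d.primeFactors,
      (∑' n : ℕ, (p : ℝ) ^
        (min (2 * ((n : ℝ) + 1) - 2) (20 * ((n : ℝ) + 1) / 11) - 2 * ((n : ℝ) + 1)))
        ≤ (if p < P then B else 1) * (p:ℝ) ^ (-2 + ε) := by
    intro p hpmem
    have hp : p.Prime := Nat.prime_of_mem_primeFactors hpmem
    have hp2 : (2:ℝ) ≤ (p:ℝ) := by exact_mod_cast hp.two_le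
    have hp0 : (0:ℝ) < (p:ℝ) := by linarith
    have hp1 : (1:ℝ) ≤ (p:ℝ) := by linarith
    have hmono : (p:ℝ) ^ (-2:ℝ) ≤ (p:ℝ) ^ (-2 + ε) :=
      Real.rpow_le_rpow_of_exponent_le hp1 (by linarith)
    have hbase := aux_tsum_le p hp
    by_cases hcase : p < P
    · simp only [hcase, if_true]
      calc _ ≤ A * (p:ℝ) ^ (-2:ℝ) := hbase
        _ ≤ B * (p:ℝ) ^ (-2 + ε) :=
          mul_le_mul hAB hmono (Real.rpow_pos_of_pos hp0 _).le (by linarith)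
    · simp only [hcase, if_false, one_mul]
      -- here P ≤ p, so A ≤ p ^ ε
      have hPp : (P:ℝ) ≤ (p:ℝ) := by exact_mod_cast Nat.le_of_not_lt hcase
      have hApow : A ≤ (p:ℝ) ^ ε := by
        have h1 : A ^ ((1:ℝ)/ε) ≤ (p:ℝ) := le_trans hP hPp
        have h2 : (A ^ ((1:ℝ)/ε)) ^ ε ≤ (p:ℝ) ^ ε :=
          Real.rpow_le_rpow (Real.rpow_pos_of_pos hA0 _).le h1 hε.le
        rwa [← Real.rpow_mul hA0.le, one_div, inv_mul_cancel₀ hε.ne', Real.rpow_one] at h2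
      calc _ ≤ A * (p:ℝ) ^ (-2:ℝ) := hbase
        _ ≤ (p:ℝ) ^ ε * (p:ℝ) ^ (-2:ℝ) :=
          mul_le_mul_of_nonneg_right hApow (Real.rpow_pos_of_pos hp0 _).le
        _ = (p:ℝ) ^ (-2 + ε) := by
          rw [← Real.rpow_add hp0]; ring_nf
  have prod_le : (∏ p ∈ d.primeFactors,
      ∑' n : ℕ, (p : ℝ) ^
        (min (2 * ((n : ℝ) + 1) - 2) (20 * ((n : ℝ) + 1) / 11) - 2 * ((n : ℝ) + 1)))
      ≤ ∏ p ∈ d.primeFactors, (if p < P then B else 1) * (p:ℝ) ^ (-2 + ε) := by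
    apply Finset.prod_le_prod _ keyp
    intro p hpmem
    exact tsum_nonneg fun n => (Real.rpow_pos_of_pos
      (by exact_mod_cast (Nat.prime_of_mem_primeFactors hpmem).pos) _).le
  rw [Finset.prod_mul_distrib] at prod_le
  have hconst : (∏ p ∈ d.primeFactors, (if p < P then B else 1)) ≤ B ^ P := by
    rw [← Finset.prod_filter, Finset.prod_const]
    apply pow_le_pow_right₀ hB1
    have hsub : d.primeFactors.filter (· < P) ⊆ Finset.range P := by
      intro x hx
      simp only [Finset.mem_filter] at hx
      exact Finset.mem_range.mpr hx.2
    simpa using Finset.card_le_card hsub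
  have hprodrpow : (∏ p ∈ d.primeFactors, (p:ℝ) ^ (-2 + ε)) = (d : ℝ) ^ (-2 + ε) := by
    rw [Real.finset_prod_rpow _ _ (fun p _ => by positivity)]
    rw [← Nat.cast_prod, Nat.prod_primeFactors_of_squarefree hd]
  refine prod_le.trans ?_
  rw [hprodrpow]
  apply mul_le_mul_of_nonneg_right hconst
  positivity
end

section
/- Let g be a real-valued function on the prime numbers with 0 < g(p) < 1 for every prime p and g(p) → 1/5 as p → ∞, and for squarefree d ≥ 1 set h_d = ∏_{p | d} g(p)/(1 − g(p)). For z ≥ 2 let P(z) = ∏_{p < z} p. Then for every ε > 0 there exist constants c_ε, C_ε > 0 and D_0 ≥ 1 such that for all real D ≥ D_0 and all z ≥ √D: c_ε · D^{1/2 − ε} ≤ ∑_{d < √D, d | P(z)} h_d ≤ C_ε · D^{1/2 + ε}, where the sum is over positive (necessarily squarefree) divisors d of P(z) with d < √D. -/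
open Finset

lemma divisors_eq_filter (n d : ℕ) (hd : d ∈ Finset.Ioc 0 n) :
    d.divisors = (Finset.Ioc 0 n).filter (· ∣ d) := by
  rw [Finset.mem_Ioc] at hd
  ext a
  simp only [Nat.mem_divisors, Finset.mem_filter, Finset.mem_Ioc]
  constructor
  · rintro ⟨ha, hd0⟩
    exact ⟨⟨Nat.pos_of_dvd_of_pos ha hd.1, le_trans (Nat.le_of_dvd hd.1 ha) hd.2⟩, ha⟩
  · rintro ⟨_, ha⟩
    exact ⟨ha, by omega⟩

lemma tau_sum_le (n : ℕ) :
    (∑ d ∈ Finset.Icc 1 n, (d.divisors.card : ℝ)) ≤ n * (1 + Real.log n) := by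
  have h1 : ∑ d ∈ Finset.Icc 1 n, d.divisors.card = ∑ a ∈ Finset.Icc 1 n, n / a := by
    rw [show Finset.Icc 1 n = Finset.Ioc 0 n from rfl]
    calc ∑ d ∈ Finset.Ioc 0 n, d.divisors.card
        = ∑ d ∈ Finset.Ioc 0 n, ∑ a ∈ Finset.Ioc 0 n, if a ∣ d then 1 else 0 := by
          refine Finset.sum_congr rfl fun d hd => ?_
          rw [divisors_eq_filter n d hd, Finset.card_filter]
      _ = ∑ a ∈ Finset.Ioc 0 n, ∑ d ∈ Finset.Ioc 0 n, if a ∣ d then 1 else 0 :=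
          Finset.sum_comm
      _ = ∑ a ∈ Finset.Ioc 0 n, n / a := by
          refine Finset.sum_congr rfl fun a _ => ?_
          rw [← Finset.card_filter]
          exact Nat.Ioc_filter_dvd_card_eq_div n a
  calc (∑ d ∈ Finset.Icc 1 n, (d.divisors.card : ℝ))
      = ((∑ d ∈ Finset.Icc 1 n, d.divisors.card : ℕ) : ℝ) := by push_cast; rfl
    _ = ((∑ a ∈ Finset.Icc 1 n, n / a : ℕ) : ℝ) := by rw [h1]
    _ = ∑ a ∈ Finset.Icc 1 n, ((n / a : ℕ) : ℝ) := by push_cast; rfl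
    _ ≤ ∑ a ∈ Finset.Icc 1 n, (n : ℝ) / a :=
          Finset.sum_le_sum fun a _ => Nat.cast_div_le
    _ = (n:ℝ) * ∑ a ∈ Finset.Icc 1 n, (a:ℝ)⁻¹ := by
          rw [Finset.mul_sum]; exact Finset.sum_congr rfl fun a _ => div_eq_mul_inv _ _
    _ = (n:ℝ) * (harmonic n : ℝ) := by
          rw [harmonic_eq_sum_Icc]; push_cast; ring
    _ ≤ n * (1 + Real.log n) :=
          mul_le_mul_of_nonneg_left (harmonic_le_one_add_log n) (by positivity)

lemma inv_sq_sum_le' : ∀ n : ℕ, 2 ≤ n → ∑ m ∈ Finset.Icc 2 n, ((1:ℝ) / (m*m)) ≤ 3/4 - 1/n := by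
  refine Nat.le_induction ?_ ?_
  · norm_num
  · intro n hn ih
    rw [Finset.sum_Icc_succ_top (by omega)]
    have hn0 : (0:ℝ) < n := by positivity
    have hn1 : (0:ℝ) < (n:ℝ) + 1 := by positivity
    have key : (1:ℝ) / ((n+1)*(n+1)) ≤ 1/n - 1/(n+1) := by
      rw [div_sub_div _ _ (ne_of_gt hn0) (ne_of_gt hn1),
        div_le_div_iff₀ (by positivity) (by positivity)]
      ring_nf
      nlinarith
    push_cast
    linarith

lemma inv_sq_sum_le (n : ℕ) : ∑ m ∈ Finset.Icc 2 n, ((1:ℝ) / (m*m)) ≤ 3/4 := by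
  rcases le_or_gt 2 n with h | h
  · have h1 := inv_sq_sum_le' n h
    have h2 : (0:ℝ) < n := by positivity
    have h3 : (0:ℝ) < 1/(n:ℝ) := by positivity
    linarith
  · interval_cases n <;> norm_num

lemma nonsquarefree_card_le (n : ℕ) :
    (((Finset.Icc 1 n).filter (fun d => ¬ Squarefree d)).card : ℝ) ≤ 3/4 * n := by
  have hsub : (Finset.Icc 1 n).filter (fun d => ¬ Squarefree d) ⊆
      (Finset.Icc 2 n).biUnion (fun m => (Finset.Icc 1 n).filter (fun d => m*m ∣ d)) := by
    intro d hd
    rw [Finset.mem_filter, Finset.mem_Icc] at hd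
    obtain ⟨⟨hd1, hdn⟩, hnsq⟩ := hd
    rw [Nat.squarefree_iff_prime_squarefree] at hnsq
    push_neg at hnsq
    obtain ⟨p, hp, hpd⟩ := hnsq
    have hp2 : 2 ≤ p := hp.two_le
    have hpn : p ≤ n := by
      have := Nat.le_of_dvd (by omega) hpd
      nlinarith
    rw [Finset.mem_biUnion]
    exact ⟨p, Finset.mem_Icc.mpr ⟨hp2, hpn⟩,
      Finset.mem_filter.mpr ⟨Finset.mem_Icc.mpr ⟨hd1, hdn⟩, hpd⟩⟩
  calc (((Finset.Icc 1 n).filter (fun d => ¬ Squarefree d)).card : ℝ)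
      ≤ (((Finset.Icc 2 n).biUnion
          (fun m => (Finset.Icc 1 n).filter (fun d => m*m ∣ d))).card : ℝ) := by
        exact_mod_cast Nat.cast_le.mpr (Finset.card_le_card hsub)
    _ ≤ ∑ m ∈ Finset.Icc 2 n, (((Finset.Icc 1 n).filter (fun d => m*m ∣ d)).card : ℝ) := by
        exact_mod_cast Nat.cast_le.mpr Finset.card_biUnion_le
    _ ≤ ∑ m ∈ Finset.Icc 2 n, (n:ℝ) / (m*m) := by
        refine Finset.sum_le_sum fun m _ => ?_
        have h : ((Finset.Icc 1 n).filter (fun d => m*m ∣ d)).card = n / (m*m) := by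
          rw [show Finset.Icc 1 n = Finset.Ioc 0 n from rfl]
          exact Nat.Ioc_filter_dvd_card_eq_div n (m*m)
        rw [h]
        calc ((n / (m*m) : ℕ):ℝ) ≤ (n:ℝ)/((m*m:ℕ):ℝ) := Nat.cast_div_le
          _ = (n:ℝ)/(m*m) := by push_cast; ring
    _ = (n:ℝ) * ∑ m ∈ Finset.Icc 2 n, (1:ℝ)/(m*m) := by
        rw [Finset.mul_sum]; exact Finset.sum_congr rfl fun m _ => by ring
    _ ≤ (n:ℝ) * (3/4) := mul_le_mul_of_nonneg_left (inv_sq_sum_le n) (by positivity)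
    _ = 3/4 * n := by ring

lemma two_pow_omega_le_tau (d : ℕ) (hd : d ≠ 0) :
    (2:ℕ) ^ d.primeFactors.card ≤ d.divisors.card := by
  have h : d.divisors.card = ∏ p ∈ d.primeFactors, (d.factorization p + 1) := by
    rw [Nat.card_divisors hd, ← Nat.support_factorization]
  rw [h, ← Finset.prod_const]
  refine Finset.prod_le_prod' fun p hp => ?_
  have : d.factorization p ≠ 0 := by
    rw [← Nat.support_factorization] at hp
    exact Finsupp.mem_support_iff.mp hp
  omega



/-- `P z = ∏_{p < z} p`, the product of all primes (in `ℕ`) less than the real number `z`.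
For a natural number `p`, `p < z` is equivalent to `p < ⌈z⌉₊` (for `z ≥ 0`). -/
noncomputable def primesProdBelow (z : ℝ) : ℕ :=
  ∏ p ∈ (Finset.range ⌈z⌉₊).filter Nat.Prime, p

set_option maxHeartbeats 1600000 in
open scoped Classical in
/-- Let `g` be a real-valued function on the primes with `0 < g p < 1`
and `g p → 1/5` as `p → ∞` along the primes; for squarefree `d ≥ 1` let
`h_d = ∏_{p ∣ d} g p / (1 − g p)`, and for `z ≥ 2` let `P(z) = ∏_{p < z} p`.
Then for every `ε > 0` there are constants `c_ε, C_ε > 0` and `D₀ ≥ 1` such that for all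
real `D ≥ D₀` and all `z ≥ √D`:
`c_ε · D^(1/2−ε) ≤ ∑_{d < √D, d ∣ P(z)} h_d ≤ C_ε · D^(1/2+ε)`. -/
theorem sum_hd_asymptotics (g : ℕ → ℝ)
    (hg : ∀ p : ℕ, p.Prime → 0 < g p ∧ g p < 1)
    (hlim : Filter.Tendsto g (Filter.atTop ⊓ Filter.principal {p : ℕ | p.Prime})
      (nhds (1 / 5))) :
    ∀ ε : ℝ, 0 < ε → ∃ c C D₀ : ℝ, 0 < c ∧ 0 < C ∧ 1 ≤ D₀ ∧
      ∀ D z : ℝ, D₀ ≤ D → Real.sqrt D ≤ z →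
        c * D ^ ((1 : ℝ) / 2 - ε) ≤
          (∑ d ∈ (primesProdBelow z).divisors.filter (fun d : ℕ => (d : ℝ) < Real.sqrt D),
            ∏ p ∈ d.primeFactors, g p / (1 - g p)) ∧
        (∑ d ∈ (primesProdBelow z).divisors.filter (fun d : ℕ => (d : ℝ) < Real.sqrt D),
            ∏ p ∈ d.primeFactors, g p / (1 - g p)) ≤ C * D ^ ((1 : ℝ) / 2 + ε) := by
  intro ε hε
  -- Step 1: extract N from the limit
  have hball : Set.Ioo (3/20 : ℝ) (1/4) ∈ nhds (1/5 : ℝ) :=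
    Ioo_mem_nhds (by norm_num) (by norm_num)
  have hpre := hlim hball
  rw [Filter.mem_map, Filter.mem_inf_principal] at hpre
  rw [Filter.mem_atTop_sets] at hpre
  obtain ⟨N, hN⟩ := hpre
  have hNbig : ∀ p : ℕ, N ≤ p → p.Prime → 3/20 < g p ∧ g p < 1/4 := by
    intro p hp hpp
    have := hN p hp hpp
    exact ⟨this.1, this.2⟩
  -- basic positivity facts
  have hpos : ∀ p : ℕ, p.Prime → 0 < g p / (1 - g p) := fun p hp =>
    div_pos (hg p hp).1 (by linarith [(hg p hp).2])
  have hbig_lb : ∀ p : ℕ, N ≤ p → p.Prime → 1/7 ≤ g p / (1 - g p) := by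
    intro p hp hpp
    have h1 := (hNbig p hp hpp).1
    have h2 := (hg p hpp).2
    rw [le_div_iff₀ (by linarith)]
    linarith
  have hbig_ub : ∀ p : ℕ, N ≤ p → p.Prime → g p / (1 - g p) ≤ 1 := by
    intro p hp hpp
    have h1 := (hNbig p hp hpp).2
    have h2 := (hg p hpp).1
    rw [div_le_one (by linarith)]
    linarith
  -- Step 2: δ
  set sP : Finset ℕ := (Finset.range N).filter Nat.Prime with hsP
  set s : Finset ℝ := insert (1/7 : ℝ) (sP.image (fun p => g p / (1 - g p))) with hsdef
  have hs : s.Nonempty := ⟨1/7, Finset.mem_insert_self _ _⟩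
  set δ : ℝ := s.min' hs with hδdef
  have hδpos : 0 < δ := by
    rw [hδdef, Finset.lt_min'_iff]
    intro y hy
    rw [hsdef, Finset.mem_insert] at hy
    rcases hy with rfl | hy
    · norm_num
    · obtain ⟨p, hp, rfl⟩ := Finset.mem_image.mp hy
      exact hpos p (Finset.mem_filter.mp hp).2
  have hδ17 : δ ≤ 1/7 := Finset.min'_le _ _ (Finset.mem_insert_self _ _)
  have hδ1 : δ ≤ 1 := by linarith
  have hδle : ∀ p : ℕ, p.Prime → δ ≤ g p / (1 - g p) := by
    intro p hp
    rcases lt_or_ge p N with h | h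
    · exact Finset.min'_le _ _ (Finset.mem_insert_of_mem
        (Finset.mem_image_of_mem _ (Finset.mem_filter.mpr ⟨Finset.mem_range.mpr h, hp⟩)))
    · exact le_trans hδ17 (hbig_lb p h hp)
  -- Step 3: C₁
  set C₁ : ℝ := ∏ p ∈ sP, max 1 (g p / (1 - g p)) with hC₁def
  have hone_le_prod : ∀ (t : Finset ℕ), (1:ℝ) ≤ ∏ p ∈ t, max 1 (g p / (1 - g p)) := by
    intro t
    calc (1:ℝ) = ∏ _p ∈ t, (1:ℝ) := (Finset.prod_const_one).symm
      _ ≤ ∏ p ∈ t, max 1 (g p / (1 - g p)) :=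
        Finset.prod_le_prod (fun _ _ => zero_le_one) (fun p _ => le_max_left _ _)
  have hC₁ : 1 ≤ C₁ := hone_le_prod sP
  have hFC : ∀ d : ℕ, (∏ p ∈ d.primeFactors, g p / (1 - g p)) ≤ C₁ := by
    intro d
    calc ∏ p ∈ d.primeFactors, g p / (1 - g p)
        ≤ ∏ p ∈ d.primeFactors, max 1 (g p / (1 - g p)) :=
          Finset.prod_le_prod (fun p hp => (hpos p (Nat.prime_of_mem_primeFactors hp)).le)
            (fun p _ => le_max_right _ _)
      _ = ∏ p ∈ d.primeFactors.filter (· < N), max 1 (g p / (1 - g p)) := by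
          refine (Finset.prod_subset (Finset.filter_subset _ _) ?_).symm
          intro p hp hnp
          have hNp : N ≤ p := by
            by_contra hc
            exact hnp (Finset.mem_filter.mpr ⟨hp, by omega⟩)
          have := hbig_ub p hNp (Nat.prime_of_mem_primeFactors hp)
          exact max_eq_left this
      _ ≤ C₁ := by
          have hsub : d.primeFactors.filter (· < N) ⊆ sP := by
            intro p hp
            rw [Finset.mem_filter] at hp
            exact Finset.mem_filter.mpr ⟨Finset.mem_range.mpr hp.2,
              Nat.prime_of_mem_primeFactors hp.1⟩
          rw [hC₁def, ← Finset.prod_sdiff hsub]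
          refine le_mul_of_one_le_left ?_ (hone_le_prod _)
          calc (0:ℝ) ≤ ∏ _p ∈ d.primeFactors.filter (· < N), (1:ℝ) := by
                rw [Finset.prod_const_one]; norm_num
            _ ≤ ∏ p ∈ d.primeFactors.filter (· < N), max 1 (g p / (1 - g p)) :=
              Finset.prod_le_prod (fun _ _ => zero_le_one) (fun p _ => le_max_left _ _)
  -- Step 4: eventual inequality
  have hlogδinv : 0 < Real.log δ⁻¹ := by
    apply Real.log_pos
    rw [lt_inv_comm₀] <;> try norm_num
    · linarith
    · exact hδpos
  set a : ℝ := 2 * ε * Real.log 2 / Real.log δ⁻¹ with hadef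
  have hlog2 : (0:ℝ) < Real.log 2 := Real.log_pos (by norm_num)
  have ha : 0 < a := by positivity
  have hev : ∀ᶠ x : ℝ in Filter.atTop, 8*(1+Real.log x) ≤ x ^ a := by
    have h1 := Asymptotics.IsLittleO.def (isLittleO_log_rpow_atTop (half_pos ha)) (by norm_num : (0:ℝ) < 1/32)
    have h2 := (tendsto_rpow_atTop (half_pos ha)).eventually_ge_atTop 32
    filter_upwards [h1, h2, Filter.eventually_ge_atTop (1:ℝ)] with x hx1 hx2 hx3
    have hlog : 0 ≤ Real.log x := Real.log_nonneg hx3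
    have hrp : 0 ≤ x ^ (a/2) := Real.rpow_nonneg (by linarith) _
    rw [Real.norm_eq_abs, Real.norm_eq_abs, abs_of_nonneg hlog, abs_of_nonneg hrp] at hx1
    have hmono : x ^ (a/2) ≤ x ^ a :=
      Real.rpow_le_rpow_of_exponent_le hx3 (by linarith)
    linarith
  obtain ⟨x₀', hx₀'⟩ := Filter.eventually_atTop.mp hev
  set x₀ : ℝ := max x₀' 2 with hx₀def
  have hx₀2 : 2 ≤ x₀ := le_max_right _ _
  refine ⟨δ/16, C₁, max 4 (x₀^2), by positivity, by linarith, by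
      have : (0:ℝ) ≤ x₀^2 := by positivity
      have := le_max_left (4:ℝ) (x₀^2); linarith, ?_⟩
  intro D z hD hz
  have hD4 : (4:ℝ) ≤ D := le_trans (le_max_left _ _) hD
  have hDx₀ : x₀^2 ≤ D := le_trans (le_max_right _ _) hD
  have hD0 : (0:ℝ) < D := by linarith
  have hD1 : (1:ℝ) ≤ D := by linarith
  set x : ℝ := Real.sqrt D with hxdef
  have hx2 : 2 ≤ x := by
    rw [hxdef, show (2:ℝ) = Real.sqrt 4 by
      rw [show (4:ℝ) = 2^2 by norm_num, Real.sqrt_sq (by norm_num)]]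
    exact Real.sqrt_le_sqrt hD4
  have hxpos : 0 < x := by linarith
  have hxx₀ : x₀ ≤ x := by
    rw [hxdef, show x₀ = Real.sqrt (x₀^2) from (Real.sqrt_sq (by linarith)).symm]
    exact Real.sqrt_le_sqrt hDx₀
  have hx1 : (1:ℝ) ≤ x := by linarith
  have hlogx : 0 ≤ Real.log x := Real.log_nonneg hx1
  -- n
  set n : ℕ := ⌈x⌉₊ - 1 with hndef
  have hceil2 : 2 ≤ ⌈x⌉₊ := by
    have h1 : (1:ℕ) < ⌈x⌉₊ := Nat.lt_ceil.mpr (by push_cast; linarith)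
    omega
  have hn1 : 1 ≤ n := by omega
  have hnltx : (n:ℝ) < x := Nat.lt_ceil.mp (by omega)
  have hxlen : x - 1 ≤ (n:ℝ) := by
    have h1 := Nat.le_ceil x
    have h2 : (n:ℝ) = (⌈x⌉₊:ℝ) - 1 := by
      rw [hndef]
      push_cast [Nat.cast_sub (by omega : 1 ≤ ⌈x⌉₊)]
      ring
    linarith
  have hx2len : x/2 ≤ (n:ℝ) := by linarith
  -- T
  set L : ℝ := Real.logb 2 (8*(1+Real.log x)) with hLdef
  have hargpos : (0:ℝ) < 8*(1+Real.log x) := by linarith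
  have harg1 : (1:ℝ) ≤ 8*(1+Real.log x) := by linarith
  have hL0 : 0 ≤ L := Real.logb_nonneg (by norm_num) harg1
  set T : ℕ := ⌈L⌉₊ with hTdef
  have hTL : (T:ℝ) ≤ L + 1 := (Nat.ceil_lt_add_one hL0).le
  have h2T : 8*(1+Real.log x) ≤ (2:ℝ)^T := by
    calc 8*(1+Real.log x) = (2:ℝ) ^ L := (Real.rpow_logb (by norm_num) (by norm_num) hargpos).symm
      _ ≤ (2:ℝ) ^ (T:ℝ) := Real.rpow_le_rpow_of_exponent_le one_le_two (Nat.le_ceil L)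
      _ = (2:ℝ)^T := Real.rpow_natCast 2 T
  have h2Tpos : (0:ℝ) < (2:ℝ)^T := by positivity
  -- δ^T lower bound
  have hδT : δ * x ^ (-(2*ε)) ≤ δ^T := by
    have hLa : L * Real.log δ⁻¹ ≤ 2 * ε * Real.log x := by
      have harga : 8*(1+Real.log x) ≤ x ^ a := hx₀' x (le_trans (le_max_left _ _) hxx₀)
      have hlogarg : Real.log (8*(1+Real.log x)) ≤ a * Real.log x := by
        calc Real.log (8*(1+Real.log x)) ≤ Real.log (x ^ a) :=
              Real.log_le_log hargpos harga
          _ = a * Real.log x := Real.log_rpow hxpos a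
      have hLval : L = Real.log (8*(1+Real.log x)) / Real.log 2 := by
        rw [hLdef, Real.logb]
      rw [hLval]
      rw [div_mul_eq_mul_div, div_le_iff₀ hlog2]
      calc Real.log (8*(1+Real.log x)) * Real.log δ⁻¹
          ≤ (a * Real.log x) * Real.log δ⁻¹ := by
            apply mul_le_mul_of_nonneg_right hlogarg hlogδinv.le
        _ = 2 * ε * Real.log x * Real.log 2 := by
            have hcancel : a * Real.log δ⁻¹ = 2 * ε * Real.log 2 := by
              rw [hadef]; exact div_mul_cancel₀ _ hlogδinv.ne'
            calc (a * Real.log x) * Real.log δ⁻¹ = (a * Real.log δ⁻¹) * Real.log x := by ring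
              _ = 2 * ε * Real.log x * Real.log 2 := by rw [hcancel]; ring
    have e1 : δ ^ T = Real.exp (Real.log δ * T) := by
      rw [← Real.rpow_natCast δ T, Real.rpow_def_of_pos hδpos]
    have e2 : δ * x ^ (-(2*ε)) = Real.exp (Real.log δ + Real.log x * (-(2*ε))) := by
      rw [Real.exp_add, ← Real.rpow_def_of_pos hxpos, Real.exp_log hδpos]
    rw [e1, e2]
    apply Real.exp_le_exp.mpr
    have hlogδ : Real.log δ = -Real.log δ⁻¹ := by
      rw [Real.log_inv]; ring
    have hTL' : Real.log δ * T ≥ Real.log δ * (L + 1) := by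
      apply mul_le_mul_of_nonpos_left hTL
      rw [hlogδ]; linarith
    have : Real.log δ * (L + 1) ≥ Real.log δ + Real.log x * (-(2*ε)) := by
      rw [hlogδ]
      have : -Real.log δ⁻¹ * L ≥ -(2 * ε * Real.log x) := by linarith
      nlinarith [hLa]
    linarith
  -- the sets
  have hPne : primesProdBelow z ≠ 0 := by
    unfold primesProdBelow
    exact (Finset.prod_pos fun p hp => (Finset.mem_filter.mp hp).2.pos).ne'
  set F : ℕ → ℝ := fun d => ∏ p ∈ d.primeFactors, g p / (1 - g p) with hFdef
  have hFpos : ∀ d : ℕ, 0 < F d := fun d =>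
    Finset.prod_pos fun p hp => hpos p (Nat.prime_of_mem_primeFactors hp)
  set Sf : Finset ℕ := (primesProdBelow z).divisors.filter (fun d : ℕ => (d : ℝ) < x)
    with hSfdef
  have hSfsub : Sf ⊆ Finset.Icc 1 n := by
    intro d hd
    rw [hSfdef, Finset.mem_filter, Nat.mem_divisors] at hd
    have hd0 : d ≠ 0 := by
      rintro rfl
      exact hPne (zero_dvd_iff.mp hd.1.1)
    have : d < ⌈x⌉₊ := Nat.lt_ceil.mpr hd.2
    rw [Finset.mem_Icc]
    omega
  -- upper bound
  have upper : (∑ d ∈ Sf, F d) ≤ C₁ * D ^ ((1:ℝ)/2 + ε) := by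
    have h1 : (∑ d ∈ Sf, F d) ≤ Sf.card • C₁ :=
      Finset.sum_le_card_nsmul _ _ _ (fun d _ => hFC d)
    have hIcc : (Finset.Icc 1 n).card = n := by rw [Nat.card_Icc, Nat.add_sub_cancel]
    have h2 : (Sf.card : ℝ) ≤ n := by
      exact_mod_cast Nat.cast_le.mpr (le_trans (Finset.card_le_card hSfsub) hIcc.le)
    have h3 : (∑ d ∈ Sf, F d) ≤ (n:ℝ) * C₁ := by
      rw [nsmul_eq_mul] at h1
      calc (∑ d ∈ Sf, F d) ≤ (Sf.card:ℝ) * C₁ := h1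
        _ ≤ (n:ℝ) * C₁ := mul_le_mul_of_nonneg_right h2 (by linarith)
    have h4 : x = D ^ ((1:ℝ)/2) := Real.sqrt_eq_rpow D
    have h5 : D ^ ((1:ℝ)/2) ≤ D ^ ((1:ℝ)/2 + ε) :=
      Real.rpow_le_rpow_of_exponent_le hD1 (by linarith)
    calc (∑ d ∈ Sf, F d) ≤ (n:ℝ) * C₁ := h3
      _ ≤ x * C₁ := mul_le_mul_of_nonneg_right hnltx.le (by linarith)
      _ ≤ D ^ ((1:ℝ)/2 + ε) * C₁ :=
          mul_le_mul_of_nonneg_right (le_trans (le_of_eq h4) h5) (by linarith)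
      _ = C₁ * D ^ ((1:ℝ)/2 + ε) := mul_comm _ _
  -- lower bound
  set G : Finset ℕ := (Finset.Icc 1 n).filter
    (fun d => Squarefree d ∧ d.primeFactors.card ≤ T) with hGdef
  have hGsub : G ⊆ Sf := by
    intro d hd
    rw [hGdef, Finset.mem_filter, Finset.mem_Icc] at hd
    obtain ⟨⟨hd1, hdn⟩, hsq, _⟩ := hd
    have hdx : (d:ℝ) < x := by
      have : (d:ℝ) ≤ n := by exact_mod_cast hdn
      linarith
    have hpf : d.primeFactors ⊆ (Finset.range ⌈z⌉₊).filter Nat.Prime := by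
      intro p hp
      have hpp := Nat.prime_of_mem_primeFactors hp
      have hpd : p ∣ d := Nat.dvd_of_mem_primeFactors hp
      have hple : p ≤ d := Nat.le_of_dvd (by omega) hpd
      have : (p:ℝ) < z := by
        have : (p:ℝ) ≤ d := by exact_mod_cast hple
        linarith
      exact Finset.mem_filter.mpr ⟨Finset.mem_range.mpr (Nat.lt_ceil.mpr this), hpp⟩
    have hdvd : d ∣ primesProdBelow z := by
      conv_lhs => rw [← Nat.prod_primeFactors_of_squarefree hsq]
      exact Finset.prod_dvd_prod_of_subset _ _ _ hpf
    rw [hSfdef, Finset.mem_filter, Nat.mem_divisors]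
    exact ⟨⟨hdvd, hPne⟩, hdx⟩
  -- cardinality of G
  set B₁ : Finset ℕ := (Finset.Icc 1 n).filter (fun d => ¬ Squarefree d) with hB₁def
  set B₂ : Finset ℕ := (Finset.Icc 1 n).filter (fun d => T < d.primeFactors.card) with hB₂def
  have hcover : Finset.Icc 1 n ⊆ G ∪ B₁ ∪ B₂ := by
    intro d hd
    rw [Finset.mem_union, Finset.mem_union, hGdef, hB₁def, hB₂def,
      Finset.mem_filter, Finset.mem_filter, Finset.mem_filter]
    by_cases h1 : Squarefree d
    · by_cases h2 : d.primeFactors.card ≤ T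
      · exact Or.inl (Or.inl ⟨hd, h1, h2⟩)
      · exact Or.inr ⟨hd, by omega⟩
    · exact Or.inl (Or.inr ⟨hd, h1⟩)
  have hcardsum : (n:ℝ) ≤ (G.card:ℝ) + B₁.card + B₂.card := by
    have h1 : n ≤ (G ∪ B₁ ∪ B₂).card := by
      calc n = (Finset.Icc 1 n).card := by rw [Nat.card_Icc, Nat.add_sub_cancel]
        _ ≤ (G ∪ B₁ ∪ B₂).card := Finset.card_le_card hcover
    have h2 : (G ∪ B₁ ∪ B₂).card ≤ G.card + B₁.card + B₂.card := by
      calc (G ∪ B₁ ∪ B₂).card ≤ (G ∪ B₁).card + B₂.card := Finset.card_union_le _ _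
        _ ≤ G.card + B₁.card + B₂.card := by
            have := Finset.card_union_le G B₁
            omega
    exact_mod_cast Nat.cast_le.mpr (le_trans h1 h2)
  have hB₁card : (B₁.card : ℝ) ≤ 3/4 * n := nonsquarefree_card_le n
  have hB₂card : (B₂.card : ℝ) ≤ (n:ℝ)/8 := by
    have h1 : B₂.card * 2^T ≤ ∑ d ∈ Finset.Icc 1 n, d.divisors.card := by
      calc B₂.card * 2^T = ∑ _d ∈ B₂, 2^T := by rw [Finset.sum_const, smul_eq_mul]
        _ ≤ ∑ d ∈ B₂, d.divisors.card := by
            refine Finset.sum_le_sum fun d hd => ?_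
            rw [hB₂def, Finset.mem_filter, Finset.mem_Icc] at hd
            calc (2:ℕ)^T ≤ 2^d.primeFactors.card :=
                  Nat.pow_le_pow_right (by norm_num) (by omega)
              _ ≤ d.divisors.card := two_pow_omega_le_tau d (by omega)
        _ ≤ ∑ d ∈ Finset.Icc 1 n, d.divisors.card :=
            Finset.sum_le_sum_of_subset (Finset.filter_subset _ _)
    have h2 : (B₂.card:ℝ) * 2^T ≤ (n:ℝ) * (1 + Real.log n) := by
      calc (B₂.card:ℝ) * 2^T = ((B₂.card * 2^T : ℕ):ℝ) := by push_cast; ring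
        _ ≤ ((∑ d ∈ Finset.Icc 1 n, d.divisors.card : ℕ):ℝ) := by exact_mod_cast h1
        _ = ∑ d ∈ Finset.Icc 1 n, (d.divisors.card:ℝ) := by push_cast; rfl
        _ ≤ (n:ℝ) * (1 + Real.log n) := tau_sum_le n
    have h3 : (1:ℝ) + Real.log n ≤ 1 + Real.log x := by
      have := Real.log_le_log (by exact_mod_cast hn1 : (0:ℝ) < (n:ℝ)) hnltx.le
      linarith
    have h4 : (n:ℝ) * (1 + Real.log n) ≤ (n:ℝ)/8 * (2:ℝ)^T := by
      calc (n:ℝ) * (1 + Real.log n) ≤ (n:ℝ) * (1 + Real.log x) :=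
            mul_le_mul_of_nonneg_left h3 (by positivity)
        _ = (n:ℝ)/8 * (8 * (1 + Real.log x)) := by ring
        _ ≤ (n:ℝ)/8 * (2:ℝ)^T := mul_le_mul_of_nonneg_left h2T (by positivity)
    have := le_trans h2 h4
    exact le_of_mul_le_mul_right this h2Tpos
  have hGcard : (n:ℝ)/8 ≤ (G.card:ℝ) := by linarith
  -- each term in G is at least δ^T
  have hFδ : ∀ d ∈ G, δ^T ≤ F d := by
    intro d hd
    rw [hGdef, Finset.mem_filter] at hd
    have hω : d.primeFactors.card ≤ T := hd.2.2
    calc δ^T ≤ δ^(d.primeFactors.card) := pow_le_pow_of_le_one hδpos.le hδ1 hω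
      _ = ∏ _p ∈ d.primeFactors, δ := by rw [Finset.prod_const]
      _ ≤ ∏ p ∈ d.primeFactors, g p / (1 - g p) :=
          Finset.prod_le_prod (fun p _ => hδpos.le)
            (fun p hp => hδle p (Nat.prime_of_mem_primeFactors hp))
  have lower : δ/16 * D ^ ((1:ℝ)/2 - ε) ≤ ∑ d ∈ Sf, F d := by
    have hDx : D ^ ((1:ℝ)/2 - ε) = x * x ^ (-(2*ε)) := by
      have h4 : x = D ^ ((1:ℝ)/2) := Real.sqrt_eq_rpow D
      rw [show (1:ℝ)/2 - ε = (1/2) * (1 + -(2*ε)) by ring, Real.rpow_mul hD0.le, ← h4,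
        Real.rpow_add hxpos, Real.rpow_one]
    calc δ/16 * D ^ ((1:ℝ)/2 - ε) = x/16 * (δ * x ^ (-(2*ε))) := by rw [hDx]; ring
      _ ≤ x/16 * δ^T := mul_le_mul_of_nonneg_left hδT (by positivity)
      _ ≤ (G.card:ℝ) * δ^T := by
          refine mul_le_mul_of_nonneg_right ?_ (by positivity)
          linarith
      _ ≤ ∑ d ∈ G, F d := by
          have := Finset.card_nsmul_le_sum G F (δ^T) hFδ
          rwa [nsmul_eq_mul] at this
      _ ≤ ∑ d ∈ Sf, F d :=
          Finset.sum_le_sum_of_subset_of_nonneg hGsub (fun d _ _ => (hFpos d).le)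
  exact ⟨lower, upper⟩
end

section
/- Let X ≥ 2 and z ≥ X^{1/200} be real numbers, and let P = ∏_{p < z} p. Let g : ℕ → ℝ satisfy g(1) = 1, g(de) = g(d)g(e) whenever d and e are coprime divisors of P, and 1/6 ≤ g(p) ≤ 1/4 for every prime p < z. Let (a_n)_{n ≥ 1} be nonnegative real numbers with a_n = 0 unless n divides P. Suppose that for every positive divisor d of P, |∑_{n ≡ 0 (mod d)} a_n − g(d)·X| ≤ d · g(d) · X^{39/40}. Then for every ε > 0 there is a constant C_ε > 0, independent of X, z, g, and (a_n), such that a_1 ≤ C_ε · X^{199/200 + ε}. -/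
open Finset


lemma cheb_nat (n : ℕ) (hn : 1 ≤ n) :
    4 ^ n ≤ (2 * n) ^ (((Finset.range (2*n+1)).filter Nat.Prime).card + 1) := by
  have h1 : Nat.centralBinom n ≤ (2*n) ^ (((Finset.range (2*n+1)).filter Nat.Prime).card) := by
    rw [← Nat.prod_pow_factorization_centralBinom n]
    have heq : ∏ p ∈ (Finset.range (2*n+1)).filter Nat.Prime,
        p ^ (Nat.centralBinom n).factorization p
        = ∏ p ∈ Finset.range (2*n+1), p ^ (Nat.centralBinom n).factorization p := by
      apply Finset.prod_filter_of_ne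
      intro p _ hne
      have hv : (Nat.centralBinom n).factorization p ≠ 0 := by
        intro h0; rw [h0, pow_zero] at hne; exact hne rfl
      have : p ∈ (Nat.centralBinom n).factorization.support := by
        exact Finsupp.mem_support_iff.mpr hv
      rw [Nat.support_factorization] at this
      exact Nat.prime_of_mem_primeFactors this
    rw [← heq]
    calc ∏ p ∈ (Finset.range (2*n+1)).filter Nat.Prime,
            p ^ (Nat.centralBinom n).factorization p
        ≤ ∏ _p ∈ (Finset.range (2*n+1)).filter Nat.Prime, (2*n) := by
          apply Finset.prod_le_prod'
          intro p _
          have := @Nat.pow_factorization_choose_le p (2*n) n (by omega)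
          simpa [Nat.centralBinom] using this
      _ = (2*n) ^ (((Finset.range (2*n+1)).filter Nat.Prime).card) := by
          rw [Finset.prod_const]
  calc 4 ^ n ≤ 2 * n * Nat.centralBinom n :=
        Nat.four_pow_le_two_mul_self_mul_centralBinom n hn
    _ ≤ 2 * n * (2*n) ^ (((Finset.range (2*n+1)).filter Nat.Prime).card) :=
        Nat.mul_le_mul_left _ h1
    _ = (2 * n) ^ ((((Finset.range (2*n+1)).filter Nat.Prime).card) + 1) := by
        rw [pow_succ]; ring

lemma prime_count_lower {δ : ℝ} (hδ0 : 0 < δ) (hδ1 : δ ≤ 1) :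
    ∃ B : ℝ, 5 ≤ B ∧ ∀ Y : ℝ, B ≤ Y →
      Y ^ (1 - δ) ≤ (((Finset.range ⌈Y⌉₊).filter Nat.Prime).card : ℝ) := by
  have hL : (0:ℝ) < Real.log 2 := Real.log_pos (by norm_num)
  set K : ℝ := 16 / (δ * Real.log 2) with hK
  have hK0 : 0 < K := by positivity
  refine ⟨max 5 (K ^ (2/δ)), le_max_left _ _, ?_⟩
  intro Y hY
  have hY5 : (5:ℝ) ≤ Y := le_trans (le_max_left _ _) hY
  have hY0 : (0:ℝ) < Y := by linarith
  have hY1 : (1:ℝ) ≤ Y := by linarith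
  set N := ⌈Y⌉₊ with hN
  have hNY : (Y:ℝ) ≤ N := Nat.le_ceil Y
  have hN5 : 5 ≤ N := by exact_mod_cast le_trans hY5 hNY
  have hNY1 : (N:ℝ) < Y + 1 := Nat.ceil_lt_add_one (le_of_lt hY0)
  set n := (N - 1) / 2 with hn
  have h2n1 : 2*n + 1 ≤ N := by omega
  have hn1 : 1 ≤ n := by omega
  have h2n2 : N ≤ 2*n + 2 := by omega
  set t := ((Finset.range N).filter Nat.Prime).card with ht
  set c := ((Finset.range (2*n+1)).filter Nat.Prime).card with hc
  have hct : c ≤ t := by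
    apply Finset.card_le_card
    exact Finset.filter_subset_filter _ (Finset.range_subset_range.mpr h2n1)
  -- cast Chebyshev to ℝ and take logs
  have hcheb : ((4:ℝ)) ^ n ≤ ((2*n:ℕ):ℝ) ^ (c + 1) := by
    exact_mod_cast cheb_nat n hn1
  have hlog : (n:ℝ) * Real.log 4 ≤ (c+1 : ℝ) * Real.log (2*(n:ℝ)) := by
    have h1 : Real.log ((4:ℝ)^n) ≤ Real.log (((2*n:ℕ):ℝ) ^ (c+1)) :=
      Real.log_le_log (by positivity) hcheb
    rw [Real.log_pow, Real.log_pow] at h1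
    push_cast at h1 ⊢
    convert h1 using 2
  have hlog4 : Real.log 4 = 2 * Real.log 2 := by
    rw [show (4:ℝ) = 2^2 by norm_num, Real.log_pow]; push_cast; ring
  have h2nY : 2*(n:ℝ) ≤ Y := by
    have : (2*n:ℝ) ≤ (N:ℝ) - 1 := by
      have : ((2*n+1 : ℕ):ℝ) ≤ (N:ℝ) := by exact_mod_cast h2n1
      push_cast at this; linarith
    linarith
  have hnge : (Y - 2)/2 ≤ (n:ℝ) := by
    have : ((N:ℝ)) ≤ 2*(n:ℝ) + 2 := by exact_mod_cast h2n2
    linarith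
  have hlogY0 : 0 < Real.log Y := Real.log_pos (by linarith)
  have hlog2n : Real.log (2*(n:ℝ)) ≤ Real.log Y := by
    apply Real.log_le_log (by positivity) h2nY
  have hmain : (Y - 2) * Real.log 2 ≤ (t+1 : ℝ) * Real.log Y := by
    have s1 : (Y-2) * Real.log 2 = ((Y-2)/2) * Real.log 4 := by rw [hlog4]; ring
    have s2 : ((Y-2)/2) * Real.log 4 ≤ (n:ℝ) * Real.log 4 := by
      apply mul_le_mul_of_nonneg_right hnge (by rw [hlog4]; positivity)
    have hn1R : (1:ℝ) ≤ (n:ℝ) := by exact_mod_cast hn1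
    have hlog2n0 : 0 ≤ Real.log (2*(n:ℝ)) := Real.log_nonneg (by linarith)
    have s3 : (c+1:ℝ) * Real.log (2*(n:ℝ)) ≤ (t+1:ℝ) * Real.log Y := by
      apply mul_le_mul (by exact_mod_cast Nat.succ_le_succ hct) hlog2n hlog2n0 (by positivity)
    linarith
  -- log Y ≤ (2/δ) * Y^(δ/2)
  have hlogYb : Real.log Y ≤ (2/δ) * Y ^ (δ/2) := by
    have h1 : Real.log (Y ^ (δ/2)) = (δ/2) * Real.log Y := Real.log_rpow hY0 _
    have h2 : Real.log (Y ^ (δ/2)) ≤ Y ^ (δ/2) - 1 :=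
      Real.log_le_sub_one_of_pos (Real.rpow_pos_of_pos hY0 _)
    have h3 : (δ/2) * Real.log Y ≤ Y ^ (δ/2) := by
      rw [← h1]; linarith
    calc Real.log Y = (2/δ) * ((δ/2) * Real.log Y) := by field_simp
      _ ≤ (2/δ) * Y ^ (δ/2) := by
          apply mul_le_mul_of_nonneg_left h3 (by positivity)
  -- Y^(δ/2) ≥ K
  have hu : K ≤ Y ^ (δ/2) := by
    have h1 : K ^ (2/δ) ≤ Y := le_trans (le_max_right _ _) hY
    have h2 : (K ^ (2/δ)) ^ (δ/2) ≤ Y ^ (δ/2) :=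
      Real.rpow_le_rpow (by positivity) h1 (by positivity)
    rwa [← Real.rpow_mul (le_of_lt hK0), show (2/δ)*(δ/2) = 1 by field_simp,
      Real.rpow_one] at h2
  -- put together
  set u : ℝ := Y ^ (δ/2) with hudef
  have hu0 : 0 < u := Real.rpow_pos_of_pos hY0 _
  set v : ℝ := Y ^ (1-δ) with hvdef
  have hv1 : 1 ≤ v := Real.one_le_rpow hY1 (by linarith)
  have hvuu : v * u * u = Y := by
    rw [hudef, hvdef, ← Real.rpow_add hY0, ← Real.rpow_add hY0,
      show 1 - δ + δ/2 + δ/2 = 1 by ring, Real.rpow_one]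
  have h16 : 16 ≤ u * (δ * Real.log 2) := by
    rw [hK] at hu
    rw [div_le_iff₀ (by positivity)] at hu
    linarith
  have hfin : (Y - 2) * Real.log 2 ≤ (t+1:ℝ) * ((2/δ) * u) := by
    calc (Y - 2) * Real.log 2 ≤ (t+1:ℝ) * Real.log Y := hmain
      _ ≤ (t+1:ℝ) * ((2/δ) * u) := by
          apply mul_le_mul_of_nonneg_left hlogYb (by positivity)
  -- conclude v ≤ t
  have hY4 : Y/2 ≤ Y - 2 := by linarith
  have key : 4 * v ≤ (t+1:ℝ) := by
    have e0 : (Y/2)*Real.log 2 ≤ (Y-2)*Real.log 2 :=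
      mul_le_mul_of_nonneg_right hY4 (le_of_lt hL)
    have e1 : (v*u*u/2) * Real.log 2 ≤ (t+1:ℝ) * ((2/δ) * u) := by
      rw [hvuu]; linarith
    -- multiply by δ/(4u) > 0
    have e2 : (δ/(4*u)) * ((v*u*u/2) * Real.log 2) ≤ (δ/(4*u)) * ((t+1:ℝ) * ((2/δ) * u)) :=
      mul_le_mul_of_nonneg_left e1 (by positivity)
    have e3 : (δ/(4*u)) * ((v*u*u/2) * Real.log 2) = v * (u * (δ * Real.log 2)) / 8 := by
      field_simp; ring
    have e4 : (δ/(4*u)) * ((t+1:ℝ) * ((2/δ) * u)) = (t+1:ℝ)/2 := by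
      field_simp; ring
    rw [e3, e4] at e2
    have e5 : v * 16 ≤ v * (u * (δ * Real.log 2)) :=
      mul_le_mul_of_nonneg_left h16 (by linarith)
    linarith
  have : v ≤ (t:ℝ) := by linarith
  exact this

lemma quad_bound {m Sp : ℝ} (h0 : 0 < m) (h1 : m ≤ Sp) (h2 : 2 ≤ Sp) :
    Sp + Sp^2 + 2*m*Sp + m^2 ≤ 5*Sp^2 := by nlinarith

lemma sq_bound {Sp m Y : ℝ} (h0 : 0 ≤ Sp) (h1 : Sp ≤ 6*m*Y) :
    Sp^2 ≤ 36*m^2*Y^2 := by nlinarith [mul_self_le_mul_self h0 h1]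



set_option maxHeartbeats 1000000 in
/-- Let `X ≥ 2` and `z ≥ X^(1/200)` be real, `P = ∏_{p < z} p`.
Let `g : ℕ → ℝ` satisfy `g 1 = 1`, `g (d·e) = g d · g e` for coprime divisors `d, e` of `P`,
and `1/6 ≤ g p ≤ 1/4` for every prime `p < z`. Let `(a_n)` be nonnegative reals supported on
divisors of `P`, and suppose that for every positive divisor `d` of `P`,
`|∑_{n ≡ 0 (mod d), n ≥ 1} a_n − g d · X| ≤ d · g d · X^(39/40)`.
Then for every `ε > 0` there is `C_ε > 0`, independent of `X, z, g, a`, with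
`a 1 ≤ C_ε · X^(199/200 + ε)`. -/
theorem selberg_sieve_power_saving :
    ∀ ε : ℝ, 0 < ε → ∃ C : ℝ, 0 < C ∧
      ∀ (X z : ℝ) (g a : ℕ → ℝ), 2 ≤ X → X ^ ((1 : ℝ) / 200) ≤ z →
        g 1 = 1 →
        (∀ d e : ℕ, d ∣ primesProdBelow z → e ∣ primesProdBelow z → Nat.Coprime d e →
          g (d * e) = g d * g e) →
        (∀ p : ℕ, p.Prime → (p : ℝ) < z → 1 / 6 ≤ g p ∧ g p ≤ 1 / 4) →
        (∀ n : ℕ, 0 ≤ a n) →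
        (∀ n : ℕ, ¬n ∣ primesProdBelow z → a n = 0) →
        (∀ d : ℕ, d ∣ primesProdBelow z →
          |(∑' n : ℕ, if 0 < n ∧ d ∣ n then a n else 0) - g d * X| ≤
            (d : ℝ) * g d * X ^ ((39 : ℝ) / 40)) →
        a 1 ≤ C * X ^ ((199 : ℝ) / 200 + ε) := by
  intro ε hε
  set δ : ℝ := min (200*ε) 1 with hδdef
  have hδ0 : 0 < δ := lt_min (by linarith) one_pos
  have hδ1 : δ ≤ 1 := min_le_right _ _
  obtain ⟨B, hB5, hB⟩ := prime_count_lower hδ0 hδ1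
  set B₀ : ℝ := B ^ (200:ℝ) with hB₀def
  have hB0pos : 0 < B₀ := Real.rpow_pos_of_pos (by linarith) _
  refine ⟨186 + 2*B₀, by positivity, ?_⟩
  intro X z g a hX2 hzX hg1 hgmul hgp ha0 hasupp hyp
  have hX0 : (0:ℝ) < X := by linarith
  have hX1 : (1:ℝ) ≤ X := by linarith
  have hexp0 : (0:ℝ) ≤ (199:ℝ)/200 + ε := by linarith
  have hXε1 : (1:ℝ) ≤ X ^ ((199:ℝ)/200 + ε) := Real.one_le_rpow hX1 hexp0
  have hX39 : (0:ℝ) ≤ X ^ ((39:ℝ)/40) := Real.rpow_nonneg (le_of_lt hX0) _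
  set P := primesProdBelow z with hPdef
  have hP0 : P ≠ 0 := by
    rw [hPdef, primesProdBelow]
    exact Finset.prod_ne_zero_iff.mpr fun p hp =>
      (Nat.Prime.pos (Finset.mem_filter.mp hp).2).ne'
  set D := P.divisors with hDdef
  set F : ℕ → ℝ := fun d => ∑ n ∈ D, if d ∣ n then a n else 0 with hFdef
  -- tsum = finite sum
  have hFt : ∀ d : ℕ, (∑' n : ℕ, if 0 < n ∧ d ∣ n then a n else 0) = F d := by
    intro d
    have h1 : (∑' n : ℕ, if 0 < n ∧ d ∣ n then a n else 0)
        = ∑ n ∈ D, if 0 < n ∧ d ∣ n then a n else 0 := by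
      apply tsum_eq_sum
      intro n hn
      have hnP : ¬ n ∣ P := by
        intro hdvd
        exact hn (Nat.mem_divisors.mpr ⟨hdvd, hP0⟩)
      simp [hasupp n hnP]
    rw [h1, hFdef]
    apply Finset.sum_congr rfl
    intro n hn
    have hnpos : 0 < n := Nat.pos_of_mem_divisors hn
    simp [hnpos]
  have hF : ∀ d : ℕ, d ∣ P → |F d - g d * X| ≤ (d:ℝ) * g d * X ^ ((39:ℝ)/40) := by
    intro d hd
    have := hyp d hd
    rwa [hFt d] at this
  have hFub : ∀ d : ℕ, d ∣ P → F d ≤ g d * X + (d:ℝ) * g d * X ^ ((39:ℝ)/40) := by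
    intro d hd
    have := abs_le.mp (hF d hd)
    linarith [this.2]
  have hFlb : ∀ d : ℕ, d ∣ P → g d * X - (d:ℝ) * g d * X ^ ((39:ℝ)/40) ≤ F d := by
    intro d hd
    have := abs_le.mp (hF d hd)
    linarith [this.1]
  have h1D : (1:ℕ) ∈ D := Nat.one_mem_divisors.mpr hP0
  -- trivial bound
  have ha1F1 : a 1 ≤ F 1 := by
    have h := Finset.single_le_sum (f := fun n => if (1:ℕ) ∣ n then a n else 0)
      (fun n _ => by by_cases h : (1:ℕ) ∣ n <;> simp [h, ha0 n]) h1D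
    rw [hFdef]
    simpa using h
  have hX39X : X ^ ((39:ℝ)/40) ≤ X := by
    nth_rewrite 2 [show X = X ^ (1:ℝ) from (Real.rpow_one X).symm]
    exact Real.rpow_le_rpow_of_exponent_le hX1 (by norm_num)
  have htriv : a 1 ≤ 2 * X := by
    have h1 : F 1 ≤ g 1 * X + (1:ℝ) * g 1 * X ^ ((39:ℝ)/40) := by
      have := hFub 1 (one_dvd P)
      simpa using this
    rw [hg1] at h1
    linarith
  by_cases hcase : X ≤ B₀
  · calc a 1 ≤ 2*X := htriv
      _ ≤ 2*B₀ := by linarith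
      _ = 2*B₀ * 1 := by ring
      _ ≤ 2*B₀ * X ^ ((199:ℝ)/200 + ε) := by
          apply mul_le_mul_of_nonneg_left hXε1 (by positivity)
      _ ≤ (186 + 2*B₀) * X ^ ((199:ℝ)/200 + ε) := by
          apply mul_le_mul_of_nonneg_right _ (by positivity)
          linarith
  push_neg at hcase
  -- main case
  set Y : ℝ := X ^ ((1:ℝ)/200) with hYdef
  have hY0 : 0 < Y := Real.rpow_pos_of_pos hX0 _
  have hYz : Y ≤ z := hzX
  have hYB : B ≤ Y := by
    have h1 : B₀ ^ ((1:ℝ)/200) ≤ X ^ ((1:ℝ)/200) :=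
      Real.rpow_le_rpow (le_of_lt hB0pos) (le_of_lt hcase) (by norm_num)
    rwa [hB₀def, ← Real.rpow_mul (by linarith : (0:ℝ) ≤ B),
      show (200:ℝ)*(1/200) = 1 by norm_num, Real.rpow_one] at h1
  have hY5 : (5:ℝ) ≤ Y := le_trans hB5 hYB
  set T := (Finset.range ⌈Y⌉₊).filter Nat.Prime with hTdef
  set t := T.card with htdef
  set W : ℝ := Y ^ (1 - δ) with hWdef
  have hW1 : (1:ℝ) ≤ W := Real.one_le_rpow (by linarith) (by linarith)
  have hW0 : (0:ℝ) < W := by linarith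
  have htW : W ≤ (t:ℝ) := hB Y hYB
  have ht1 : (1:ℝ) ≤ (t:ℝ) := le_trans hW1 htW
  have hTfacts : ∀ p ∈ T, Nat.Prime p ∧ (p:ℝ) < Y ∧ (p:ℝ) < z ∧ p ∣ P := by
    intro p hp
    obtain ⟨hpr, hprime⟩ := Finset.mem_filter.mp hp
    have hplt : p < ⌈Y⌉₊ := Finset.mem_range.mp hpr
    have hpY : (p:ℝ) < Y := by
      have h1 : (p:ℝ) + 1 ≤ (⌈Y⌉₊:ℝ) := by exact_mod_cast hplt
      have h2 : (⌈Y⌉₊:ℝ) < Y + 1 := Nat.ceil_lt_add_one (le_of_lt hY0)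
      linarith
    have hpz : (p:ℝ) < z := lt_of_lt_of_le hpY hYz
    have hpP : p ∣ P := by
      rw [hPdef, primesProdBelow]
      apply Finset.dvd_prod_of_mem
      apply Finset.mem_filter.mpr
      refine ⟨Finset.mem_range.mpr ?_, hprime⟩
      have : (p:ℝ) < (⌈z⌉₊:ℝ) := lt_of_lt_of_le hpz (Nat.le_ceil z)
      exact_mod_cast this
    exact ⟨hprime, hpY, hpz, hpP⟩
  have hgT : ∀ p ∈ T, 1/6 ≤ g p ∧ g p ≤ 1/4 := fun p hp =>
    hgp p (hTfacts p hp).1 (hTfacts p hp).2.2.1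
  have hp2 : ∀ p ∈ T, (2:ℝ) ≤ (p:ℝ) := fun p hp => by
    exact_mod_cast (hTfacts p hp).1.two_le
  set m : ℝ := ∑ p ∈ T, g p with hmdef
  set Sp : ℝ := ∑ p ∈ T, (p:ℝ) with hSpdef
  have hm6 : (t:ℝ)/6 ≤ m := by
    have h := Finset.card_nsmul_le_sum T (fun p => g p) (1/6:ℝ)
      (fun p hp => (hgT p hp).1)
    rw [nsmul_eq_mul] at h
    rw [hmdef]; linarith [h]
  have hm0 : (0:ℝ) < m := lt_of_lt_of_le (by linarith) hm6
  have hmSp : m ≤ Sp := by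
    rw [hmdef, hSpdef]
    apply Finset.sum_le_sum
    intro p hp
    linarith [(hgT p hp).2, hp2 p hp]
  have hSpY : Sp ≤ (t:ℝ) * Y := by
    have h := Finset.sum_le_card_nsmul T (fun p => ((p:ℕ):ℝ)) Y
      (fun p hp => le_of_lt (hTfacts p hp).2.1)
    rw [nsmul_eq_mul] at h
    exact h
  have hSp2 : (2:ℝ) ≤ Sp := by
    have h := Finset.card_nsmul_le_sum T (fun p => ((p:ℕ):ℝ)) 2 hp2
    rw [nsmul_eq_mul] at h
    nlinarith [h, ht1]
  set ω : ℕ → ℝ := fun n => ∑ p ∈ T, (if p ∣ n then (1:ℝ) else 0) with hωdef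
  have hω1 : ω 1 = 0 := by
    simp only [hωdef]
    apply Finset.sum_eq_zero
    intro p hp
    rw [if_neg]
    intro hdvd
    exact (hTfacts p hp).1.ne_one (Nat.dvd_one.mp hdvd)
  have key : a 1 * m^2 ≤ ∑ n ∈ D, a n * (ω n - m)^2 := by
    have h := Finset.single_le_sum (f := fun n => a n * (ω n - m)^2)
      (fun n _ => mul_nonneg (ha0 n) (sq_nonneg _)) h1D
    calc a 1 * m^2 = a 1 * (ω 1 - m)^2 := by rw [hω1]; ring
      _ ≤ _ := h
  have expand : ∑ n ∈ D, a n * (ω n - m)^2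
      = (∑ n ∈ D, a n * (ω n)^2) - 2*m*(∑ n ∈ D, a n * ω n) + m^2 * (∑ n ∈ D, a n) := by
    have hpt : ∀ n ∈ D, a n * (ω n - m)^2
        = a n * (ω n)^2 - 2*m*(a n * ω n) + m^2 * a n := by
      intro n _; ring
    rw [Finset.sum_congr rfl hpt, Finset.sum_add_distrib, Finset.sum_sub_distrib,
      ← Finset.mul_sum, ← Finset.mul_sum]
  have hA0 : ∑ n ∈ D, a n = F 1 := by
    simp only [hFdef]
    apply Finset.sum_congr rfl
    intro n _
    simp
  have hA1 : ∑ p ∈ T, F p = ∑ n ∈ D, a n * ω n := by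
    simp only [hFdef, hωdef]
    rw [Finset.sum_comm]
    apply Finset.sum_congr rfl
    intro n _
    rw [Finset.mul_sum]
    apply Finset.sum_congr rfl
    intro p _
    by_cases h : p ∣ n <;> simp [h]
  set F2 : ℕ → ℕ → ℝ := fun p q => ∑ n ∈ D, if p ∣ n ∧ q ∣ n then a n else 0 with hF2def
  have hA2 : ∑ p ∈ T, ∑ q ∈ T, F2 p q = ∑ n ∈ D, a n * (ω n)^2 := by
    simp only [hF2def, hωdef]
    calc ∑ p ∈ T, ∑ q ∈ T, ∑ n ∈ D, (if p ∣ n ∧ q ∣ n then a n else 0)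
        = ∑ p ∈ T, ∑ n ∈ D, ∑ q ∈ T, (if p ∣ n ∧ q ∣ n then a n else 0) :=
          Finset.sum_congr rfl fun p _ => Finset.sum_comm
      _ = ∑ n ∈ D, ∑ p ∈ T, ∑ q ∈ T, (if p ∣ n ∧ q ∣ n then a n else 0) :=
          Finset.sum_comm
      _ = ∑ n ∈ D, a n * (∑ p ∈ T, (if p ∣ n then (1:ℝ) else 0))^2 := by
          apply Finset.sum_congr rfl
          intro n _
          rw [sq, Finset.sum_mul_sum, Finset.mul_sum]
          apply Finset.sum_congr rfl
          intro p _
          rw [Finset.mul_sum]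
          apply Finset.sum_congr rfl
          intro q _
          by_cases h1 : p ∣ n <;> by_cases h2 : q ∣ n <;> simp [h1, h2]
  have hF2diag : ∀ p : ℕ, F2 p p = F p := by
    intro p
    simp only [hF2def, hFdef]
    exact Finset.sum_congr rfl fun n _ => if_congr and_self_iff rfl rfl
  have hF2off : ∀ p ∈ T, ∀ q ∈ T, p ≠ q → F2 p q = F (p*q) := by
    intro p hp q hq hne
    have hco : Nat.Coprime p q :=
      (Nat.coprime_primes (hTfacts p hp).1 (hTfacts q hq).1).mpr hne
    simp only [hF2def, hFdef]
    apply Finset.sum_congr rfl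
    intro n _
    have hiff : (p ∣ n ∧ q ∣ n) ↔ p*q ∣ n :=
      ⟨fun h => hco.mul_dvd_of_dvd_of_dvd h.1 h.2,
       fun h => ⟨dvd_trans (dvd_mul_right p q) h, dvd_trans (dvd_mul_left q p) h⟩⟩
    exact if_congr hiff rfl rfl
  -- lower bound on Σ1
  have hE1 : m * X - Sp * X ^ ((39:ℝ)/40) ≤ ∑ p ∈ T, F p := by
    have h : ∑ p ∈ T, (g p * X - (p:ℝ) * X ^ ((39:ℝ)/40)) ≤ ∑ p ∈ T, F p := by
      apply Finset.sum_le_sum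
      intro p hp
      have hlb := hFlb p (hTfacts p hp).2.2.2
      have hg4 := (hgT p hp).2
      have hpnn : (0:ℝ) ≤ (p:ℝ) := by positivity
      have hmono : (p:ℝ) * g p * X ^ ((39:ℝ)/40) ≤ (p:ℝ) * 1 * X ^ ((39:ℝ)/40) :=
        mul_le_mul_of_nonneg_right
          (mul_le_mul_of_nonneg_left (by linarith) hpnn) hX39
      linarith [hlb, hmono]
    calc m * X - Sp * X ^ ((39:ℝ)/40)
        = ∑ p ∈ T, (g p * X - (p:ℝ) * X ^ ((39:ℝ)/40)) := by
          rw [hmdef, hSpdef, Finset.sum_sub_distrib, Finset.sum_mul, Finset.sum_mul]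
      _ ≤ _ := h
  -- upper bound on Σ2
  have hper : ∀ p ∈ T, ∑ q ∈ T, F2 p q ≤
      (g p * X + (p:ℝ) * X ^ ((39:ℝ)/40)) + (g p * m * X + (p:ℝ) * Sp * X ^ ((39:ℝ)/40)) := by
    intro p hp
    have hpP := (hTfacts p hp).2.2.2
    have hg4 := (hgT p hp).2
    have hg6 := (hgT p hp).1
    have hpnn : (0:ℝ) ≤ (p:ℝ) := by positivity
    rw [← Finset.add_sum_erase T _ hp]
    apply add_le_add
    · rw [hF2diag p]
      have hub := hFub p hpP
      have hmono : (p:ℝ) * g p * X ^ ((39:ℝ)/40) ≤ (p:ℝ) * 1 * X ^ ((39:ℝ)/40) :=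
        mul_le_mul_of_nonneg_right
          (mul_le_mul_of_nonneg_left (by linarith) hpnn) hX39
      linarith [hub, hmono]
    · have step1 : ∑ q ∈ T.erase p, F2 p q ≤
          ∑ q ∈ T.erase p, (g p * g q * X + (p:ℝ)*(q:ℝ) * X ^ ((39:ℝ)/40)) := by
        apply Finset.sum_le_sum
        intro q hq
        have hqT : q ∈ T := Finset.mem_of_mem_erase hq
        have hne : p ≠ q := (Finset.ne_of_mem_erase hq).symm
        have hqP := (hTfacts q hqT).2.2.2
        have hco : Nat.Coprime p q :=
          (Nat.coprime_primes (hTfacts p hp).1 (hTfacts q hqT).1).mpr hne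
        rw [hF2off p hp q hqT hne]
        have hub := hFub (p*q) (hco.mul_dvd_of_dvd_of_dvd hpP hqP)
        rw [hgmul p q hpP hqP hco] at hub
        push_cast at hub
        have hq4 := (hgT q hqT).2
        have hq6 := (hgT q hqT).1
        have hqnn : (0:ℝ) ≤ (q:ℝ) := by positivity
        have hgq1 : g p * g q ≤ 1 := by
          have h1 : g p * g q ≤ (1/4)*(1/4) :=
            mul_le_mul hg4 hq4 (by linarith) (by norm_num)
          linarith
        have hmono : (p:ℝ) * (q:ℝ) * (g p * g q) * X ^ ((39:ℝ)/40)
            ≤ (p:ℝ) * (q:ℝ) * 1 * X ^ ((39:ℝ)/40) :=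
          mul_le_mul_of_nonneg_right
            (mul_le_mul_of_nonneg_left hgq1 (mul_nonneg hpnn hqnn)) hX39
        linarith [hub, hmono]
      have step2 : ∑ q ∈ T.erase p, (g p * g q * X + (p:ℝ)*(q:ℝ) * X ^ ((39:ℝ)/40)) ≤
          ∑ q ∈ T, (g p * g q * X + (p:ℝ)*(q:ℝ) * X ^ ((39:ℝ)/40)) := by
        apply Finset.sum_le_sum_of_subset_of_nonneg (Finset.erase_subset p T)
        intro q hq _
        have hq6 := (hgT q hq).1
        have hqnn : (0:ℝ) ≤ (q:ℝ) := by positivity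
        have h1 : (0:ℝ) ≤ g p * g q * X :=
          mul_nonneg (mul_nonneg (by linarith) (by linarith)) (le_of_lt hX0)
        have h2 : (0:ℝ) ≤ (p:ℝ)*(q:ℝ) * X ^ ((39:ℝ)/40) :=
          mul_nonneg (mul_nonneg hpnn hqnn) hX39
        linarith
      have step3 : ∑ q ∈ T, (g p * g q * X + (p:ℝ)*(q:ℝ) * X ^ ((39:ℝ)/40))
          = g p * m * X + (p:ℝ) * Sp * X ^ ((39:ℝ)/40) := by
        rw [Finset.sum_add_distrib]
        congr 1
        · rw [hmdef, Finset.mul_sum, Finset.sum_mul]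
        · rw [hSpdef, Finset.mul_sum, Finset.sum_mul]
      calc ∑ q ∈ T.erase p, F2 p q ≤ _ := step1
        _ ≤ _ := step2
        _ = _ := step3
  have hE2 : ∑ p ∈ T, ∑ q ∈ T, F2 p q ≤
      (m + m^2) * X + (Sp + Sp^2) * X ^ ((39:ℝ)/40) := by
    calc ∑ p ∈ T, ∑ q ∈ T, F2 p q
        ≤ ∑ p ∈ T, ((g p * X + (p:ℝ) * X ^ ((39:ℝ)/40))
            + (g p * m * X + (p:ℝ) * Sp * X ^ ((39:ℝ)/40))) := Finset.sum_le_sum hper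
      _ = (m + m^2) * X + (Sp + Sp^2) * X ^ ((39:ℝ)/40) := by
          rw [Finset.sum_add_distrib, Finset.sum_add_distrib, Finset.sum_add_distrib]
          have e1 : ∑ p ∈ T, g p * X = m * X := by
            rw [hmdef, Finset.sum_mul]
          have e2 : ∑ p ∈ T, (p:ℝ) * X ^ ((39:ℝ)/40) = Sp * X ^ ((39:ℝ)/40) := by
            rw [hSpdef, Finset.sum_mul]
          have e3 : ∑ p ∈ T, g p * m * X = m^2 * X := by
            rw [hmdef, sq, Finset.sum_mul, Finset.sum_mul]
          have e4 : ∑ p ∈ T, (p:ℝ) * Sp * X ^ ((39:ℝ)/40) = Sp^2 * X ^ ((39:ℝ)/40) := by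
            rw [hSpdef, sq, Finset.sum_mul, Finset.sum_mul]
          rw [e1, e2, e3, e4]
          ring
  have hE0 : F 1 ≤ X + X ^ ((39:ℝ)/40) := by
    have h1 := hFub 1 (one_dvd P)
    rw [hg1] at h1
    push_cast at h1
    linarith
  -- combine
  have total : a 1 * m^2 ≤ m * X + 5 * Sp^2 * X ^ ((39:ℝ)/40) := by
    have h := key
    rw [expand] at h
    have u2 : ∑ n ∈ D, a n * (ω n)^2 ≤ (m + m^2) * X + (Sp + Sp^2) * X ^ ((39:ℝ)/40) := by
      rw [← hA2]; exact hE2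
    have u1 : m * X - Sp * X ^ ((39:ℝ)/40) ≤ ∑ n ∈ D, a n * ω n := by
      rw [← hA1]; exact hE1
    have u0 : ∑ n ∈ D, a n ≤ X + X ^ ((39:ℝ)/40) := by
      rw [hA0]; exact hE0
    have v1 : 2*m*(m * X - Sp * X ^ ((39:ℝ)/40)) ≤ 2*m*(∑ n ∈ D, a n * ω n) :=
      mul_le_mul_of_nonneg_left u1 (by linarith)
    have v0 : m^2 * (∑ n ∈ D, a n) ≤ m^2 * (X + X ^ ((39:ℝ)/40)) :=
      mul_le_mul_of_nonneg_left u0 (sq_nonneg m)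
    have w : Sp + Sp^2 + 2*m*Sp + m^2 ≤ 5*Sp^2 := quad_bound hm0 hmSp hSp2
    have w5 := mul_le_mul_of_nonneg_right w hX39
    linarith [h, u2, v1, v0, w5]
  -- solve for a 1
  have step_a : a 1 ≤ X/m + 5*Sp^2/m^2 * X ^ ((39:ℝ)/40) := by
    have h2 : a 1 ≤ (m * X + 5 * Sp^2 * X ^ ((39:ℝ)/40))/m^2 := by
      rw [le_div_iff₀ (by positivity : (0:ℝ) < m^2)]
      exact total
    have h3 : (m * X + 5 * Sp^2 * X ^ ((39:ℝ)/40))/m^2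
        = X/m + 5*Sp^2/m^2 * X ^ ((39:ℝ)/40) := by
      field_simp
    rw [h3] at h2
    exact h2
  have step_b : X/m ≤ 6*X/W := by
    have h1 : X/m ≤ X/((t:ℝ)/6) := by
      apply div_le_div_of_nonneg_left (le_of_lt hX0) (by linarith) hm6
    have h2 : X/((t:ℝ)/6) = 6*X/(t:ℝ) := by
      rw [div_div_eq_mul_div]; ring
    have h3 : 6*X/(t:ℝ) ≤ 6*X/W := by
      apply div_le_div_of_nonneg_left (by linarith) hW0 htW
    linarith
  have step_c : 5*Sp^2/m^2 * X ^ ((39:ℝ)/40) ≤ 180 * Y^2 * X ^ ((39:ℝ)/40) := by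
    have h1 : Sp ≤ 6*m*Y := by
      have ht6 : (t:ℝ) ≤ 6*m := by linarith
      have := mul_le_mul_of_nonneg_right ht6 (le_of_lt hY0)
      calc Sp ≤ (t:ℝ)*Y := hSpY
        _ ≤ 6*m*Y := this
    have h2 : Sp^2 ≤ 36*m^2*Y^2 := sq_bound (by linarith) h1
    have h3 : 5*Sp^2/m^2 ≤ 180*Y^2 := by
      rw [div_le_iff₀ (by positivity : (0:ℝ) < m^2)]
      linarith [h2]
    apply mul_le_mul_of_nonneg_right h3 hX39
  have step_d : a 1 ≤ 6*X/W + 180*Y^2 * X ^ ((39:ℝ)/40) := by linarith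
  -- rpow computations
  have hWX : W = X ^ ((1-δ)/200) := by
    rw [hWdef, hYdef, ← Real.rpow_mul (le_of_lt hX0), show (1:ℝ)/200*(1-δ) = (1-δ)/200 by ring]
  have hXW : 6*X/W ≤ 6 * X ^ ((199:ℝ)/200 + ε) := by
    have e1 : X/W = X ^ (1 - (1-δ)/200) := by
      rw [hWX, Real.rpow_sub hX0, Real.rpow_one]
    have e2 : 1 - (1-δ)/200 ≤ (199:ℝ)/200 + ε := by
      have hδε : δ ≤ 200*ε := min_le_left _ _
      linarith
    calc 6*X/W = 6*(X/W) := by ring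
      _ = 6 * X ^ (1 - (1-δ)/200) := by rw [e1]
      _ ≤ 6 * X ^ ((199:ℝ)/200 + ε) := by
          have := Real.rpow_le_rpow_of_exponent_le hX1 e2
          linarith
  have hY2X : 180*Y^2 * X ^ ((39:ℝ)/40) ≤ 180 * X ^ ((199:ℝ)/200 + ε) := by
    have e3 : Y^2 = X ^ ((1:ℝ)/100) := by
      rw [hYdef, ← Real.rpow_natCast (X ^ ((1:ℝ)/200)) 2, ← Real.rpow_mul (le_of_lt hX0)]
      norm_num
    have e4 : Y^2 * X ^ ((39:ℝ)/40) = X ^ ((197:ℝ)/200) := by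
      rw [e3, ← Real.rpow_add hX0]
      norm_num
    have e5 : X ^ ((197:ℝ)/200) ≤ X ^ ((199:ℝ)/200 + ε) := by
      apply Real.rpow_le_rpow_of_exponent_le hX1
      linarith
    calc 180*Y^2 * X ^ ((39:ℝ)/40) = 180 * (Y^2 * X ^ ((39:ℝ)/40)) := by ring
      _ = 180 * X ^ ((197:ℝ)/200) := by rw [e4]
      _ ≤ 180 * X ^ ((199:ℝ)/200 + ε) := by linarith
  calc a 1 ≤ 6*X/W + 180*Y^2 * X ^ ((39:ℝ)/40) := step_d
    _ ≤ 6 * X ^ ((199:ℝ)/200 + ε) + 180 * X ^ ((199:ℝ)/200 + ε) := by linarith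
    _ = 186 * X ^ ((199:ℝ)/200 + ε) := by ring
    _ ≤ (186 + 2*B₀) * X ^ ((199:ℝ)/200 + ε) := by
        apply mul_le_mul_of_nonneg_right _ (by positivity)
        linarith
end

section
/- Let X ≥ 2 be real, K, and for each ε > 0 constants K_ε > 0, be given. Let c : ℕ → ℝ be a function on squarefree positive integers with c_1 = 1, c_{de} = c_d·c_e for coprime squarefree d, e, 0 ≤ c_p < 1 for every prime p, and c_d ≤ K_ε·d^{−2+ε} for all squarefree d and all ε > 0. Let f be a nonnegative real-valued function on squarefree positive integers satisfying, for all squarefree d: (i) |f(d) − c_d·X| ≤ K·(d^2·X^{39/40} + X^{199/200}) and (ii) f(d) ≤ K_ε·X·d^{−2+ε} for all ε > 0. Then the series ∑_d μ(d)·f(d) over squarefree d converges absolutely, the product ∏_p (1 − c_p) over primes converges, and for every ε > 0 there is C_ε > 0 (depending only on ε, K and the K_ε) such that |∑_d μ(d)·f(d) − (∏_p (1 − c_p))·X| ≤ C_ε · X^{399/400 + ε}. -/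
open ArithmeticFunction
open scoped ArithmeticFunction.Moebius

open Real in
private lemma sieve_key_step {r : ℝ} (hr0 : 0 < r) (hr1 : r ≤ 1) {a : ℝ} (ha : 1 ≤ a) :
    r * (a + 1) ^ (-1 - r) ≤ a ^ (-r) - (a + 1) ^ (-r) := by
  have hb0 : (0:ℝ) < a + 1 := by linarith
  have ha0 : (0:ℝ) < a := by linarith
  have hub : 1 / (a + 1) ≤ 1 := by rw [div_le_one hb0]; linarith
  have hbern : (1 - 1 / (a + 1)) ^ r ≤ 1 - r * (1 / (a + 1)) := by
    have := _root_.rpow_one_add_le_one_add_mul_self (s := -(1 / (a + 1))) (by linarith) hr0.le hr1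
    rw [← sub_eq_add_neg, mul_neg, ← sub_eq_add_neg] at this
    exact this
  have hx : 1 - 1 / (a + 1) = a / (a + 1) := by field_simp; ring
  have hxpos : 0 < a / (a + 1) := div_pos ha0 hb0
  set t : ℝ := (a / (a + 1)) ^ r with ht
  have htpos : 0 < t := rpow_pos_of_pos hxpos r
  have htle : t ≤ 1 - r / (a + 1) := by
    rw [ht, ← hx]
    rw [mul_one_div] at hbern
    exact hbern
  have hq : a ^ (-r) = (a + 1) ^ (-r) * t⁻¹ := by
    rw [ht, ← Real.rpow_neg hxpos.le, ← Real.mul_rpow hb0.le hxpos.le]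
    congr 1
    field_simp
  have hsplit : (a + 1) ^ (-1 - r) = (a + 1) ^ (-r) * (a + 1)⁻¹ := by
    rw [show (-1 - r : ℝ) = -r + (-1) by ring, Real.rpow_add hb0, Real.rpow_neg_one]
  have hrb1 : r / (a + 1) < 1 := by
    rw [div_lt_one hb0]; linarith
  have h2 : 0 < 1 - r / (a + 1) := by linarith
  have hinv : 1 + r / (a + 1) ≤ t⁻¹ := by
    have h3 : (1 - r / (a + 1))⁻¹ ≤ t⁻¹ := by
      apply inv_anti₀ htpos htle
    have h4 : 1 + r / (a + 1) ≤ (1 - r / (a + 1))⁻¹ := by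
      have hc := mul_inv_cancel₀ h2.ne'
      nlinarith [sq_nonneg (r / (a + 1)), inv_nonneg.mpr h2.le]
    linarith
  have qpos : 0 < (a + 1) ^ (-r) := rpow_pos_of_pos hb0 _
  have hmul := mul_le_mul_of_nonneg_left hinv qpos.le
  rw [hq, hsplit]
  have : r / (a + 1) = r * (a + 1)⁻¹ := by ring
  nlinarith [hmul]

open Real in
private lemma sieve_tail_bound {r : ℝ} (hr0 : 0 < r) (hr1 : r ≤ 1) {N : ℕ} (hN : 1 ≤ N) :
    ∑' d : ℕ, (if N < d then (d : ℝ) ^ (-1 - r) else 0) ≤ (N : ℝ) ^ (-r) / r := by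
  have hnonneg : ∀ d : ℕ, 0 ≤ (if N < d then (d : ℝ) ^ (-1 - r) else 0) := by
    intro d
    split
    · exact rpow_nonneg (Nat.cast_nonneg d) _
    · exact le_rfl
  have hsummable : Summable (fun d : ℕ => (if N < d then (d : ℝ) ^ (-1 - r) else 0)) := by
    apply Summable.of_nonneg_of_le hnonneg (fun d => ?_)
      (Real.summable_nat_rpow.mpr (show (-1 - r : ℝ) < -1 by linarith))
    split
    · exact le_rfl
    · exact rpow_nonneg (Nat.cast_nonneg d) _
  refine Summable.tsum_le_of_sum_le hsummable fun s => ?_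
  have claim : ∀ M : ℕ, ∑ d ∈ Finset.range (N + 1 + M), (if N < d then (d : ℝ) ^ (-1 - r) else 0)
      ≤ ((N : ℝ) ^ (-r) - ((N + M : ℕ) : ℝ) ^ (-r)) / r := by
    intro M
    induction M with
    | zero =>
      have h0 : ∑ d ∈ Finset.range (N + 1 + 0), (if N < d then (d : ℝ) ^ (-1 - r) else 0) = 0 :=
        Finset.sum_eq_zero fun d hd => if_neg (by
          simp only [Finset.mem_range] at hd; omega)
      rw [h0]
      simp
    | succ M ih =>
      have hNM : (1 : ℝ) ≤ ((N + M : ℕ) : ℝ) := by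
        have : 1 ≤ N + M := le_trans hN (Nat.le_add_right N M)
        exact_mod_cast this
      have hkey := sieve_key_step hr0 hr1 (a := ((N + M : ℕ) : ℝ)) hNM
      have hcast : ((N + 1 + M : ℕ) : ℝ) = ((N + M : ℕ) : ℝ) + 1 := by push_cast; ring
      rw [show N + 1 + (M + 1) = (N + 1 + M) + 1 by ring, Finset.sum_range_succ]
      have hif : (if N < N + 1 + M then ((N + 1 + M : ℕ) : ℝ) ^ (-1 - r) else 0)
          = (((N + M : ℕ) : ℝ) + 1) ^ (-1 - r) := by
        rw [if_pos (by omega), hcast]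
      rw [hif]
      have hterm : (((N + M : ℕ) : ℝ) + 1) ^ (-1 - r)
          ≤ (((N + M : ℕ) : ℝ) ^ (-r) - (((N + M : ℕ) : ℝ) + 1) ^ (-r)) / r := by
        rw [le_div_iff₀ hr0]
        linarith
      have hcast2 : ((N + (M + 1) : ℕ) : ℝ) = ((N + M : ℕ) : ℝ) + 1 := by push_cast; ring
      calc ∑ d ∈ Finset.range (N + 1 + M), (if N < d then (d : ℝ) ^ (-1 - r) else 0)
            + (((N + M : ℕ) : ℝ) + 1) ^ (-1 - r)
          ≤ ((N : ℝ) ^ (-r) - ((N + M : ℕ) : ℝ) ^ (-r)) / r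
            + (((N + M : ℕ) : ℝ) ^ (-r) - (((N + M : ℕ) : ℝ) + 1) ^ (-r)) / r :=
            add_le_add ih hterm
        _ = ((N : ℝ) ^ (-r) - ((N + (M + 1) : ℕ) : ℝ) ^ (-r)) / r := by rw [hcast2]; ring
  have hsub : s ⊆ Finset.range (N + 1 + s.sup _root_.id) := by
    intro d hd
    have := Finset.le_sup (f := _root_.id) hd
    simp only [_root_.id] at this
    exact Finset.mem_range.mpr (by omega)
  calc ∑ d ∈ s, (if N < d then (d : ℝ) ^ (-1 - r) else 0)
      ≤ ∑ d ∈ Finset.range (N + 1 + s.sup _root_.id), (if N < d then (d : ℝ) ^ (-1 - r) else 0) :=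
        Finset.sum_le_sum_of_subset_of_nonneg hsub (fun d _ _ => hnonneg d)
    _ ≤ ((N : ℝ) ^ (-r) - ((N + s.sup _root_.id : ℕ) : ℝ) ^ (-r)) / r := claim _
    _ ≤ (N : ℝ) ^ (-r) / r := by
        have h0 : 0 ≤ ((N + s.sup _root_.id : ℕ) : ℝ) ^ (-r) := rpow_nonneg (Nat.cast_nonneg _) _
        gcongr
        linarith

private lemma sieve_c_nonneg (c : ℕ → ℝ) (hc1 : c 1 = 1)
    (hcmul : ∀ d e : ℕ, Squarefree d → Squarefree e → Nat.Coprime d e → c (d * e) = c d * c e)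
    (hcp : ∀ p : ℕ, p.Prime → 0 ≤ c p ∧ c p < 1) :
    ∀ d : ℕ, Squarefree d → 0 ≤ c d := by
  intro d
  induction d using Nat.strong_induction_on with
  | _ d ih =>
    intro hd
    rcases eq_or_ne d 1 with rfl | hd1
    · rw [hc1]; norm_num
    · have hd0 : d ≠ 0 := hd.ne_zero
      have hpp : d.minFac.Prime := Nat.minFac_prime hd1
      have hpd : d.minFac ∣ d := d.minFac_dvd
      have hmsf : Squarefree (d / d.minFac) := hd.squarefree_of_dvd (Nat.div_dvd_of_dvd hpd)
      have hnp : ¬ d.minFac ∣ d / d.minFac := by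
        intro hdvd
        have hsq : d.minFac * d.minFac ∣ d := by
          have := mul_dvd_mul_left d.minFac hdvd
          rwa [Nat.mul_div_cancel' hpd] at this
        have : IsUnit d.minFac := hd d.minFac hsq
        exact hpp.one_lt.ne' (Nat.isUnit_iff.mp this)
      have hcop : Nat.Coprime d.minFac (d / d.minFac) :=
        (Nat.Prime.coprime_iff_not_dvd hpp).mpr hnp
      have hlt : d / d.minFac < d := Nat.div_lt_self (Nat.pos_of_ne_zero hd0) hpp.one_lt
      have heq : c d = c d.minFac * c (d / d.minFac) := by
        conv_lhs => rw [← Nat.mul_div_cancel' hpd]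
        exact hcmul _ _ hpp.squarefree hmsf hcop
      rw [heq]
      exact mul_nonneg (hcp _ hpp).1 (ih _ hlt hmsf)

set_option maxHeartbeats 1000000 in
/-- Abstract sieve from orders to maximal orders. Given `X ≥ 2`, a
constant `K`, and constants `K_ε > 0` for each `ε > 0`; `c : ℕ → ℝ` multiplicative on
squarefree integers with `c 1 = 1`, `0 ≤ c p < 1` at primes, and `c d ≤ K_ε d^(−2+ε)`;
and `f` nonnegative on squarefree integers with `|f d − c d · X| ≤ K (d² X^(39/40) +
X^(199/200))` and `f d ≤ K_ε · X · d^(−2+ε)`. Then `∑_d μ(d) f(d)` converges absolutely,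
`∏_p (1 − c p)` converges, and for every `ε > 0` there is `C_ε > 0` (depending only on
`ε, K` and the `K_ε`) with `|∑_d μ(d) f(d) − (∏_p (1 − c p)) · X| ≤ C_ε X^(399/400+ε)`. -/
theorem moebius_sum_sieve (K : ℝ) (Kf : ℝ → ℝ) (hKf : ∀ ε : ℝ, 0 < ε → 0 < Kf ε) :
    ∀ ε : ℝ, 0 < ε → ∃ C : ℝ, 0 < C ∧
      ∀ (X : ℝ) (c f : ℕ → ℝ), 2 ≤ X →
        c 1 = 1 →
        (∀ d e : ℕ, Squarefree d → Squarefree e → Nat.Coprime d e →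
          c (d * e) = c d * c e) →
        (∀ p : ℕ, p.Prime → 0 ≤ c p ∧ c p < 1) →
        (∀ ε' : ℝ, 0 < ε' → ∀ d : ℕ, Squarefree d → c d ≤ Kf ε' * (d : ℝ) ^ (-2 + ε')) →
        (∀ d : ℕ, Squarefree d → 0 ≤ f d) →
        (∀ d : ℕ, Squarefree d →
          |f d - c d * X| ≤ K * ((d : ℝ) ^ 2 * X ^ ((39 : ℝ) / 40) + X ^ ((199 : ℝ) / 200))) →
        (∀ ε' : ℝ, 0 < ε' → ∀ d : ℕ, Squarefree d → f d ≤ Kf ε' * X * (d : ℝ) ^ (-2 + ε')) →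
        (Summable fun d : ℕ => |(μ d : ℝ) * f d|) ∧
        (Multipliable fun p : Nat.Primes => 1 - c p) ∧
        |(∑' d : ℕ, (μ d : ℝ) * f d) - (∏' p : Nat.Primes, (1 - c p)) * X| ≤
          C * X ^ ((399 : ℝ) / 400 + ε) := by
  intro ε hε
  have hε₀ : (0:ℝ) < min ε (1/2) := lt_min hε (by norm_num)
  set ε₀ := min ε (1/2) with hε₀def
  have hε₀le : ε₀ ≤ 1/2 := min_le_right _ _
  have hε₀leε : ε₀ ≤ ε := min_le_left _ _
  have hKfε₀ := hKf ε₀ hε₀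
  refine ⟨20 * |K| + 4 * Kf ε₀ + 1, by nlinarith [abs_nonneg K, hKfε₀], ?_⟩
  intro X c f hX hc1 hcmul hcp hcbd hf0 hferr hfbd
  have hX0 : (0:ℝ) < X := by linarith
  have hX1 : (1:ℝ) ≤ X := by linarith
  have hcnn := sieve_c_nonneg c hc1 hcmul hcp
  have hsum32 : Summable (fun d : ℕ => (d:ℝ) ^ (-(3:ℝ)/2)) :=
    Real.summable_nat_rpow.mpr (by norm_num)
  have hcomp : ∀ (u : ℕ → ℝ) (M : ℝ), 0 ≤ M → (∀ d, ¬Squarefree d → u d = 0) →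
      (∀ d : ℕ, Squarefree d → |u d| ≤ M * (d:ℝ) ^ (-2 + ε₀)) →
      Summable (fun d : ℕ => |u d|) := by
    intro u M hM h0 hb
    refine Summable.of_nonneg_of_le (fun d => abs_nonneg _) (fun d => ?_) (hsum32.mul_left M)
    by_cases hd : Squarefree d
    · refine (hb d hd).trans (mul_le_mul_of_nonneg_left ?_ hM)
      have hd1 : (1:ℝ) ≤ (d:ℝ) := by exact_mod_cast Nat.one_le_iff_ne_zero.mpr hd.ne_zero
      exact Real.rpow_le_rpow_of_exponent_le hd1 (by linarith)
    · rw [h0 d hd, abs_zero]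
      exact mul_nonneg hM (Real.rpow_nonneg (Nat.cast_nonneg d) _)
  have hmu_abs : ∀ d : ℕ, Squarefree d → |((μ d : ℤ) : ℝ)| = 1 := by
    intro d hd
    rw [← Int.cast_abs, abs_moebius_eq_one_of_squarefree hd, Int.cast_one]
  have hzero_f : ∀ d : ℕ, ¬Squarefree d → (μ d : ℝ) * f d = 0 := by
    intro d hd
    rw [moebius_eq_zero_of_not_squarefree hd]
    push_cast
    ring
  have hzero_c : ∀ d : ℕ, ¬Squarefree d → (μ d : ℝ) * c d = 0 := by
    intro d hd
    rw [moebius_eq_zero_of_not_squarefree hd]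
    push_cast
    ring
  have hsum_f_abs : Summable (fun d : ℕ => |(μ d : ℝ) * f d|) := by
    refine hcomp _ (Kf ε₀ * X) (by positivity) hzero_f ?_
    intro d hd
    rw [abs_mul, hmu_abs d hd, one_mul, abs_of_nonneg (hf0 d hd)]
    exact hfbd ε₀ hε₀ d hd
  have hsum_c_abs : Summable (fun d : ℕ => |(μ d : ℝ) * c d|) := by
    refine hcomp _ (Kf ε₀) hKfε₀.le hzero_c ?_
    intro d hd
    rw [abs_mul, hmu_abs d hd, one_mul, abs_of_nonneg (hcnn d hd)]
    exact hcbd ε₀ hε₀ d hd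
  -- Euler product
  have hh1 : (fun d : ℕ => (μ d : ℝ) * c d) 1 = 1 := by
    simp [moebius_apply_one, hc1]
  have hhmul : ∀ {m n : ℕ}, Nat.Coprime m n →
      (fun d : ℕ => (μ d : ℝ) * c d) (m * n)
        = (fun d : ℕ => (μ d : ℝ) * c d) m * (fun d : ℕ => (μ d : ℝ) * c d) n := by
    intro m n hmn
    simp only
    by_cases hm : Squarefree m
    · by_cases hn : Squarefree n
      · have hmu : μ (m * n) = μ m * μ n := isMultiplicative_moebius.map_mul_of_coprime hmn
        rw [hmu, hcmul m n hm hn hmn]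
        push_cast
        ring
      · have h1 : ¬Squarefree (m * n) := fun h => hn (h.squarefree_of_dvd (dvd_mul_left n m))
        rw [moebius_eq_zero_of_not_squarefree h1, moebius_eq_zero_of_not_squarefree hn]
        push_cast
        ring
    · have h1 : ¬Squarefree (m * n) := fun h => hm (h.squarefree_of_dvd (dvd_mul_right m n))
      rw [moebius_eq_zero_of_not_squarefree h1, moebius_eq_zero_of_not_squarefree hm]
      push_cast
      ring
  have hhsum : Summable (fun d : ℕ => ‖(μ d : ℝ) * c d‖) := by
    simpa only [Real.norm_eq_abs] using hsum_c_abs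
  have hh0 : (fun d : ℕ => (μ d : ℝ) * c d) 0 = 0 := by simp
  have hEP := EulerProduct.eulerProduct_hasProd hh1 hhmul hhsum hh0
  have hpe : ∀ p : Nat.Primes, (∑' e : ℕ, (μ ((p : ℕ) ^ e) : ℝ) * c ((p : ℕ) ^ e))
      = 1 - c (p : ℕ) := by
    intro p
    have hp := p.prop
    have hvanish : ∀ e ∉ ({0, 1} : Finset ℕ), (μ ((p : ℕ) ^ e) : ℝ) * c ((p : ℕ) ^ e) = 0 := by
      intro e he
      simp only [Finset.mem_insert, Finset.mem_singleton] at he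
      push_neg at he
      have h2 : 2 ≤ e := by omega
      have hns : ¬Squarefree ((p : ℕ) ^ e) := by
        intro hsf
        have hdvd : (p : ℕ) * (p : ℕ) ∣ (p : ℕ) ^ e := by
          have h3 := pow_dvd_pow (p : ℕ) h2
          rwa [sq] at h3
        exact hp.one_lt.ne' (Nat.isUnit_iff.mp (hsf _ hdvd))
      rw [moebius_eq_zero_of_not_squarefree hns]
      push_cast
      ring
    rw [tsum_eq_sum hvanish, Finset.sum_pair (by norm_num : (0:ℕ) ≠ 1)]
    rw [pow_zero, pow_one, moebius_apply_one, moebius_apply_prime hp, hc1]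
    push_cast
    ring
  have hEP' : HasProd (fun p : Nat.Primes => 1 - c (p : ℕ)) (∑' d : ℕ, (μ d : ℝ) * c d) := by
    have heq : (fun p : Nat.Primes => ∑' e : ℕ, (μ ((p : ℕ) ^ e) : ℝ) * c ((p : ℕ) ^ e))
        = fun p : Nat.Primes => 1 - c (p : ℕ) := funext hpe
    rw [← heq]
    exact hEP
  refine ⟨hsum_f_abs, hEP'.multipliable, ?_⟩
  -- the quantitative bound
  set Y := X ^ ((1:ℝ)/400) with hY
  have hY1 : (1:ℝ) ≤ Y := by
    have h := Real.rpow_le_rpow zero_le_one hX1 (by norm_num : (0:ℝ) ≤ 1/400)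
    rw [Real.one_rpow] at h
    rw [hY]
    exact h
  have hY0 : (0:ℝ) < Y := lt_of_lt_of_le one_pos hY1
  set N := ⌈Y⌉₊ with hN
  have hN1 : 1 ≤ N := Nat.one_le_iff_ne_zero.mpr (by
    simp only [hN, ne_eq, Nat.ceil_eq_zero, not_le]
    exact hY0)
  have hN1R : (1:ℝ) ≤ (N:ℝ) := by exact_mod_cast hN1
  have hNY : Y ≤ (N:ℝ) := Nat.le_ceil Y
  have hNle : (N:ℝ) ≤ 2 * Y := by
    have := Nat.ceil_lt_add_one (le_of_lt hY0)
    rw [← hN] at this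
    linarith
  have hr0 : (0:ℝ) < 1 - ε₀ := by linarith
  set r := 1 - ε₀ with hrdef
  have hrhalf : (1:ℝ)/2 ≤ r := by rw [hrdef]; linarith
  have hr1 : r ≤ 1 := by rw [hrdef]; linarith
  have hexp : (-2 + ε₀ : ℝ) = -1 - r := by rw [hrdef]; ring
  have hxa : (0:ℝ) < X ^ ((39:ℝ)/40) := Real.rpow_pos_of_pos hX0 _
  have hxb : (0:ℝ) < X ^ ((199:ℝ)/200) := Real.rpow_pos_of_pos hX0 _
  have hK : 0 ≤ K := by
    have h1 := hferr 1 squarefree_one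
    push_cast at h1
    nlinarith [abs_nonneg (f 1 - c 1 * X), hxa, hxb]
  set A : ℕ → ℝ := fun d =>
    if d ≤ N then K * ((d:ℝ) ^ 2 * X ^ ((39:ℝ)/40) + X ^ ((199:ℝ)/200)) else 0 with hA
  set B : ℕ → ℝ := fun d =>
    if N < d then 2 * Kf ε₀ * X * (d:ℝ) ^ (-2 + ε₀) else 0 with hB
  have hAnn : ∀ d : ℕ, 0 ≤ A d := by
    intro d
    simp only [hA]
    split
    · exact mul_nonneg hK (by positivity)
    · exact le_rfl
  have hBnn : ∀ d : ℕ, 0 ≤ B d := by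
    intro d
    simp only [hB]
    split
    · exact mul_nonneg (mul_nonneg (mul_nonneg (by norm_num) hKfε₀.le) hX0.le)
        (Real.rpow_nonneg (Nat.cast_nonneg d) _)
    · exact le_rfl
  have hpoint : ∀ d : ℕ, |(μ d : ℝ) * f d - (μ d : ℝ) * c d * X| ≤ A d + B d := by
    intro d
    by_cases hd : Squarefree d
    · have habs : |(μ d : ℝ) * f d - (μ d : ℝ) * c d * X| = |f d - c d * X| := by
        rw [show (μ d : ℝ) * f d - (μ d : ℝ) * c d * X = (μ d : ℝ) * (f d - c d * X) by ring,
          abs_mul, hmu_abs d hd, one_mul]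
      rw [habs]
      by_cases hdN : d ≤ N
      · have hAd : A d = K * ((d:ℝ) ^ 2 * X ^ ((39:ℝ)/40) + X ^ ((199:ℝ)/200)) := by
          simp only [hA]; rw [if_pos hdN]
        have h1 := hferr d hd
        have h2 := hBnn d
        rw [hAd]
        linarith
      · have hAd : A d = 0 := by simp only [hA]; rw [if_neg hdN]
        have hBd : B d = 2 * Kf ε₀ * X * (d:ℝ) ^ (-2 + ε₀) := by
          simp only [hB]; rw [if_pos (lt_of_not_ge hdN)]
        have h1 : |f d - c d * X| ≤ f d + c d * X := by
          rw [abs_sub_le_iff]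
          constructor <;> nlinarith [hf0 d hd, mul_nonneg (hcnn d hd) hX0.le]
        have h2 : f d ≤ Kf ε₀ * X * (d:ℝ) ^ (-2 + ε₀) := hfbd ε₀ hε₀ d hd
        have h3 : c d * X ≤ Kf ε₀ * X * (d:ℝ) ^ (-2 + ε₀) := by
          calc c d * X ≤ (Kf ε₀ * (d:ℝ) ^ (-2 + ε₀)) * X :=
                mul_le_mul_of_nonneg_right (hcbd ε₀ hε₀ d hd) hX0.le
            _ = Kf ε₀ * X * (d:ℝ) ^ (-2 + ε₀) := by ring
        rw [hAd, hBd]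
        linarith
    · rw [moebius_eq_zero_of_not_squarefree hd]
      push_cast
      rw [zero_mul, zero_mul, zero_mul, sub_zero, abs_zero]
      exact add_nonneg (hAnn d) (hBnn d)
  have hsumA : Summable A :=
    summable_of_ne_finset_zero (s := Finset.range (N + 1)) (fun d hd => by
      simp only [Finset.mem_range, not_lt] at hd
      simp only [hA]
      rw [if_neg (by omega)])
  have hsum_tail : Summable (fun d : ℕ => (d:ℝ) ^ (-2 + ε₀)) :=
    Real.summable_nat_rpow.mpr (by linarith)
  have hsumB : Summable B := by
    refine Summable.of_nonneg_of_le hBnn (fun d => ?_) (hsum_tail.mul_left (2 * Kf ε₀ * X))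
    simp only [hB]
    split
    · exact le_rfl
    · exact mul_nonneg (mul_nonneg (mul_nonneg (by norm_num) hKfε₀.le) hX0.le)
        (Real.rpow_nonneg (Nat.cast_nonneg d) _)
  have hsum_u : Summable (fun d : ℕ => |(μ d : ℝ) * f d - (μ d : ℝ) * c d * X|) := by
    refine Summable.of_nonneg_of_le (fun d => abs_nonneg _) (fun d => ?_)
      (hsum_f_abs.add (hsum_c_abs.mul_right X))
    calc |(μ d : ℝ) * f d - (μ d : ℝ) * c d * X|
        ≤ |(μ d : ℝ) * f d| + |(μ d : ℝ) * c d * X| := abs_sub _ _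
      _ = |(μ d : ℝ) * f d| + |(μ d : ℝ) * c d| * X := by
          rw [abs_mul ((μ d : ℝ) * c d) X, abs_of_pos hX0]
  have hdiff : (∑' d : ℕ, (μ d : ℝ) * f d) - (∏' p : Nat.Primes, (1 - c (p : ℕ))) * X
      = ∑' d : ℕ, ((μ d : ℝ) * f d - (μ d : ℝ) * c d * X) := by
    rw [hEP'.tprod_eq, ← tsum_mul_right,
      ← Summable.tsum_sub hsum_f_abs.of_abs (hsum_c_abs.of_abs.mul_right X)]
  -- bound for the A part
  have h393 : X ^ ((393:ℝ)/400) ≤ X ^ ((399:ℝ)/400 + ε) :=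
    Real.rpow_le_rpow_of_exponent_le hX1 (by linarith)
  have h399 : X ^ ((399:ℝ)/400) ≤ X ^ ((399:ℝ)/400 + ε) :=
    Real.rpow_le_rpow_of_exponent_le hX1 (by linarith)
  have hY3 : Y ^ (3:ℕ) * X ^ ((39:ℝ)/40) = X ^ ((393:ℝ)/400) := by
    rw [hY, ← Real.rpow_natCast (X ^ ((1:ℝ)/400)) 3, ← Real.rpow_mul hX0.le,
      ← Real.rpow_add hX0]
    norm_num
  have hYb : Y * X ^ ((199:ℝ)/200) = X ^ ((399:ℝ)/400) := by
    rw [hY, ← Real.rpow_add hX0]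
    norm_num
  have htnn : (0:ℝ) ≤ K * (4 * Y ^ (2:ℕ) * X ^ ((39:ℝ)/40) + X ^ ((199:ℝ)/200)) := by
    refine mul_nonneg hK (add_nonneg (mul_nonneg (by positivity) hxa.le) hxb.le)
  have hAbound : (∑' d : ℕ, A d) ≤ 20 * K * X ^ ((399:ℝ)/400 + ε) := by
    have hAsum : (∑' d : ℕ, A d) = ∑ d ∈ Finset.range (N + 1), A d :=
      tsum_eq_sum (fun d hd => by
        simp only [Finset.mem_range, not_lt] at hd
        simp only [hA]
        rw [if_neg (by omega)])
    have hterm : ∀ d ∈ Finset.range (N + 1),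
        A d ≤ K * (4 * Y ^ (2:ℕ) * X ^ ((39:ℝ)/40) + X ^ ((199:ℝ)/200)) := by
      intro d hd
      simp only [Finset.mem_range] at hd
      simp only [hA]
      split
      · rename_i hdN
        have hdR : (d:ℝ) ≤ (N:ℝ) := by exact_mod_cast hdN
        have hd2 : (d:ℝ) ^ 2 ≤ 4 * Y ^ (2:ℕ) := by nlinarith [Nat.cast_nonneg (α := ℝ) d]
        refine mul_le_mul_of_nonneg_left ?_ hK
        have := mul_le_mul_of_nonneg_right hd2 hxa.le
        linarith
      · exact htnn
    have hsum_le := Finset.sum_le_card_nsmul (Finset.range (N + 1)) A _ hterm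
    rw [Finset.card_range, nsmul_eq_mul] at hsum_le
    have hcard : ((N + 1 : ℕ) : ℝ) ≤ 4 * Y := by push_cast; linarith
    have hstep : (∑' d : ℕ, A d)
        ≤ 4 * Y * (K * (4 * Y ^ (2:ℕ) * X ^ ((39:ℝ)/40) + X ^ ((199:ℝ)/200))) := by
      rw [hAsum]
      exact hsum_le.trans (mul_le_mul_of_nonneg_right hcard htnn)
    have hexpand : 4 * Y * (K * (4 * Y ^ (2:ℕ) * X ^ ((39:ℝ)/40) + X ^ ((199:ℝ)/200)))
        = 16 * K * (Y ^ (3:ℕ) * X ^ ((39:ℝ)/40)) + 4 * K * (Y * X ^ ((199:ℝ)/200)) := by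
      ring
    rw [hexpand, hY3, hYb] at hstep
    have e1 := mul_le_mul_of_nonneg_left h393 hK
    have e2 := mul_le_mul_of_nonneg_left h399 hK
    linarith
  -- bound for the B part
  have hBbound : (∑' d : ℕ, B d) ≤ 4 * Kf ε₀ * X ^ ((399:ℝ)/400 + ε) := by
    have hBeq : ∀ d : ℕ, B d = (2 * Kf ε₀ * X) * (if N < d then (d:ℝ) ^ (-1 - r) else 0) := by
      intro d
      simp only [hB]
      split
      · rw [hexp]
      · rw [mul_zero]
    have hBsum : (∑' d : ℕ, B d)
        = (2 * Kf ε₀ * X) * ∑' d : ℕ, (if N < d then (d:ℝ) ^ (-1 - r) else 0) := by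
      simp only [hBeq]
      exact tsum_mul_left
    have htail := sieve_tail_bound (r := r) (by linarith) hr1 hN1
    have hNYr : (N:ℝ) ^ (-r) ≤ Y ^ (-r) :=
      Real.rpow_le_rpow_of_nonpos hY0 hNY (by linarith)
    have htail2 : (∑' d : ℕ, (if N < d then (d:ℝ) ^ (-1 - r) else 0)) ≤ 2 * Y ^ (-r) := by
      refine htail.trans ?_
      rw [div_le_iff₀ (by linarith : (0:ℝ) < r)]
      nlinarith [Real.rpow_nonneg hY0.le (-r),
        mul_nonneg (Real.rpow_nonneg hY0.le (-r)) (show (0:ℝ) ≤ 2 * r - 1 by linarith)]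
    have hfact : (0:ℝ) ≤ 2 * Kf ε₀ * X := by positivity
    have hstep := mul_le_mul_of_nonneg_left htail2 hfact
    rw [← hBsum] at hstep
    have hYr : Y ^ (-r) = X ^ ((1:ℝ)/400 * (-r)) := by
      rw [hY]
      exact (Real.rpow_mul hX0.le _ _).symm
    have hXYr : X * Y ^ (-r) = X ^ (1 + (1:ℝ)/400 * (-r)) := by
      rw [hYr, Real.rpow_add hX0, Real.rpow_one]
    have hfin : X ^ (1 + (1:ℝ)/400 * (-r)) ≤ X ^ ((399:ℝ)/400 + ε) := by
      refine Real.rpow_le_rpow_of_exponent_le hX1 ?_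
      rw [hrdef]
      linarith
    have hEq : (2 * Kf ε₀ * X) * (2 * Y ^ (-r)) = 4 * Kf ε₀ * (X * Y ^ (-r)) := by ring
    rw [hEq, hXYr] at hstep
    refine hstep.trans ?_
    exact mul_le_mul_of_nonneg_left hfin (by positivity)
  have hXfin : (0:ℝ) < X ^ ((399:ℝ)/400 + ε) := Real.rpow_pos_of_pos hX0 _
  calc |(∑' d : ℕ, (μ d : ℝ) * f d) - (∏' p : Nat.Primes, (1 - c (p : ℕ))) * X|
      = |∑' d : ℕ, ((μ d : ℝ) * f d - (μ d : ℝ) * c d * X)| := by rw [hdiff]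
    _ ≤ ∑' d : ℕ, |(μ d : ℝ) * f d - (μ d : ℝ) * c d * X| := by
        have hnorm := norm_tsum_le_tsum_norm
          (f := fun d : ℕ => (μ d : ℝ) * f d - (μ d : ℝ) * c d * X)
          (by simpa [Real.norm_eq_abs] using hsum_u)
        simpa [Real.norm_eq_abs] using hnorm
    _ ≤ ∑' d : ℕ, (A d + B d) := Summable.tsum_le_tsum hpoint hsum_u (hsumA.add hsumB)
    _ = (∑' d : ℕ, A d) + (∑' d : ℕ, B d) := Summable.tsum_add hsumA hsumB
    _ ≤ 20 * K * X ^ ((399:ℝ)/400 + ε) + 4 * Kf ε₀ * X ^ ((399:ℝ)/400 + ε) :=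
        add_le_add hAbound hBbound
    _ ≤ (20 * |K| + 4 * Kf ε₀ + 1) * X ^ ((399:ℝ)/400 + ε) := by
        nlinarith [mul_le_mul_of_nonneg_right (le_abs_self K) hXfin.le, hXfin]
end
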